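/- arXiv:2509.03475 — 11 statements merged into one kernel-verified Lean document; each statement's English description precedes it below -/
import Mathlib

section
/- Let E be a real Hilbert space and f : E → ℝ convex and lower semicontinuous. If p minimizes z ↦ f(z) + (1/2)‖z − v‖² and q minimizes z ↦ f(z) + (1/2)‖z − w‖², then ‖p − q‖² ≤ ⟨p − q, v − w⟩ (firm nonexpansiveness), and consequently ‖p − q‖ ≤ ‖v − w‖, i.e., the proximal operator of f is nonexpansive (1-Lipschitz) and continuous. -/
open scoped RealInnerProductSpace

lemma prox_lim_aux (a b c : ℝ) (hc0 : 0 ≤ c)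
    (key : ∀ t : ℝ, 0 < t → t ≤ 1 → a ≤ b + t / 2 * c) : a ≤ b := by
  rcases eq_or_lt_of_le hc0 with h0 | h0
  · have := key 1 one_pos le_rfl
    rw [← h0] at this
    linarith
  · by_contra hcon
    push_neg at hcon
    have hab : 0 < a - b := by linarith
    have ht : 0 < min 1 ((a - b) / c) := lt_min one_pos (div_pos hab h0)
    have h3 := key _ ht (min_le_left _ _)
    rw [div_mul_eq_mul_div] at h3
    have h2 : (min 1 ((a - b) / c)) * c ≤ a - b := by
      rw [← le_div_iff₀ h0]; exact min_le_right _ _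
    linarith

/-- Subgradient inequality at a prox point. -/
lemma prox_subgrad_aux
    {E : Type*} [NormedAddCommGroup E] [InnerProductSpace ℝ E]
    (f : E → ℝ) (hconv : ConvexOn ℝ Set.univ f) (v p : E)
    (hp : ∀ z : E, f p + (1 / 2) * ‖p - v‖ ^ 2 ≤ f z + (1 / 2) * ‖z - v‖ ^ 2)
    (z : E) : ⟪v - p, z - p⟫ ≤ f z - f p := by
  have key : ∀ t : ℝ, 0 < t → t ≤ 1 →
      ⟪v - p, z - p⟫ ≤ f z - f p + t / 2 * ‖z - p‖ ^ 2 := by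
    intro t ht ht1
    have hc := hconv.2 (Set.mem_univ p) (Set.mem_univ z)
      (by linarith : (0:ℝ) ≤ 1 - t) ht.le (by ring)
    have hz := hp ((1 - t) • p + t • z)
    have hdecomp : ((1 - t) • p + t • z) - v = (p - v) + t • (z - p) := by
      rw [sub_smul, smul_sub, one_smul]; abel
    have hexp : ‖((1 - t) • p + t • z) - v‖ ^ 2
        = ‖p - v‖ ^ 2 + 2 * (t * ⟪p - v, z - p⟫) + t ^ 2 * ‖z - p‖ ^ 2 := by
      rw [hdecomp, norm_add_sq_real, real_inner_smul_right, norm_smul]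
      rw [Real.norm_eq_abs, mul_pow, sq_abs]
    have hneg : ⟪v - p, z - p⟫ = -⟪p - v, z - p⟫ := by
      rw [show v - p = -(p - v) by abel, inner_neg_left]
    simp only [smul_eq_mul] at hc
    rw [hexp] at hz
    rw [hneg]
    nlinarith [mul_pos ht ht]
  exact prox_lim_aux _ _ _ (sq_nonneg _) key

/-- Firm nonexpansiveness (hence nonexpansiveness) of the proximal operator of a convex
lower semicontinuous function on a real Hilbert space. -/
theorem prox_firmly_nonexpansive
    {E : Type*} [NormedAddCommGroup E] [InnerProductSpace ℝ E] [CompleteSpace E]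
    (f : E → ℝ) (hconv : ConvexOn ℝ Set.univ f) (hlsc : LowerSemicontinuous f)
    (v w p q : E)
    (hp : ∀ z : E, f p + (1 / 2) * ‖p - v‖ ^ 2 ≤ f z + (1 / 2) * ‖z - v‖ ^ 2)
    (hq : ∀ z : E, f q + (1 / 2) * ‖q - w‖ ^ 2 ≤ f z + (1 / 2) * ‖z - w‖ ^ 2) :
    ‖p - q‖ ^ 2 ≤ ⟪p - q, v - w⟫ ∧ ‖p - q‖ ≤ ‖v - w‖ := by
  have h1 := prox_subgrad_aux f hconv v p hp q
  have h2 := prox_subgrad_aux f hconv w q hq p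
  have expand : ⟪p - q, v - w⟫ - ‖p - q‖ ^ 2 = -⟪v - p, q - p⟫ - ⟪w - q, p - q⟫ := by
    rw [← real_inner_self_eq_norm_sq]
    simp only [inner_sub_left, inner_sub_right]
    rw [real_inner_comm p v, real_inner_comm q v, real_inner_comm p w, real_inner_comm q w,
      real_inner_comm q p]
    ring
  have hfirm : ‖p - q‖ ^ 2 ≤ ⟪p - q, v - w⟫ := by linarith
  refine ⟨hfirm, ?_⟩
  have hcs : ⟪p - q, v - w⟫ ≤ ‖p - q‖ * ‖v - w‖ := real_inner_le_norm _ _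
  rcases eq_or_lt_of_le (norm_nonneg (p - q)) with h0 | h0
  · rw [← h0]; exact norm_nonneg _
  · have : ‖p - q‖ * ‖p - q‖ ≤ ‖p - q‖ * ‖v - w‖ := by nlinarith
    exact le_of_mul_le_mul_left this h0
end

section
/- (Baillon–Haddad) Let E be a real Hilbert space, f : E → ℝ convex and differentiable, and suppose the gradient ∇f is Lipschitz with constant L > 0. Then ∇f is (1/L)-cocoercive: for all x, y ∈ E, ⟨∇f(x) − ∇f(y), x − y⟩ ≥ (1/L)‖∇f(x) − ∇f(y)‖². -/
open scoped RealInnerProductSpace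

section BH

variable {E : Type*} [NormedAddCommGroup E] [InnerProductSpace ℝ E] [CompleteSpace E]

private lemma bh_line_deriv (f : E → ℝ) (f' : E → E)
    (hdiff : ∀ x : E, HasGradientAt f (f' x) x) (x v : E) (t : ℝ) :
    HasDerivAt (fun t : ℝ => f (x + t • v)) ⟪f' (x + t • v), v⟫ t := by
  have hc : HasDerivAt (fun t : ℝ => x + t • v) v t := by
    simpa using ((hasDerivAt_id t).smul_const v).const_add x
  have hF : HasFDerivAt f (InnerProductSpace.toDual ℝ E (f' (x + t • v))) (x + t • v) :=
    hasGradientAt_iff_hasFDerivAt.mp (hdiff _)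
  have hh := hF.comp_hasDerivAt t hc
  simp [InnerProductSpace.toDual_apply_apply] at hh
  exact hh

private lemma bh_first_order (f : E → ℝ) (f' : E → E)
    (hconv : ConvexOn ℝ Set.univ f)
    (hdiff : ∀ x : E, HasGradientAt f (f' x) x) (x y : E) :
    f x + ⟪f' x, y - x⟫ ≤ f y := by
  have hgc : ConvexOn ℝ Set.univ (fun t : ℝ => f (x + t • (y - x))) := by
    have h := hconv.comp_affineMap (AffineMap.lineMap x y : ℝ →ᵃ[ℝ] E)
    simp only [Set.preimage_univ] at h
    have hfun : (fun t : ℝ => f (x + t • (y - x))) = f ∘ (AffineMap.lineMap x y : ℝ →ᵃ[ℝ] E) := by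
      funext t
      simp [AffineMap.lineMap_apply, add_comm]
    rw [hfun]; exact h
  have hd : HasDerivAt (fun t : ℝ => f (x + t • (y - x))) ⟪f' x, y - x⟫ 0 := by
    simpa using bh_line_deriv f f' hdiff x (y - x) 0
  have := hgc.le_slope_of_hasDerivAt (Set.mem_univ (0:ℝ)) (Set.mem_univ (1:ℝ)) one_pos hd
  simp [slope_def_field] at this
  linarith

private lemma bh_descent (f : E → ℝ) (f' : E → E) (L : ℝ) (hL : 0 < L)
    (hdiff : ∀ x : E, HasGradientAt f (f' x) x)
    (hlip : ∀ x y : E, ‖f' x - f' y‖ ≤ L * ‖x - y‖) (a b : E) :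
    f b ≤ f a + ⟪f' a, b - a⟫ + L / 2 * ‖b - a‖ ^ 2 := by
  set v : E := b - a with hv
  set c : ℝ := ⟪f' a, v⟫ with hc
  set d : ℝ := L / 2 * ‖v‖ ^ 2 with hd
  set φ : ℝ → ℝ := fun t => f a + t * c + d * t ^ 2 - f (a + t • v) with hφ
  have hφd : ∀ t : ℝ, HasDerivAt φ (c + d * (2 * t) - ⟪f' (a + t • v), v⟫) t := by
    intro t
    have h1 := bh_line_deriv f f' hdiff a v t
    have h2 : HasDerivAt (fun t : ℝ => f a + t * c + d * t ^ 2)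
        (c + d * (2 * t)) t := by
      have ha : HasDerivAt (fun t : ℝ => t * c) c t := by
        simpa using (hasDerivAt_id t).mul_const c
      have hb : HasDerivAt (fun t : ℝ => d * t ^ 2) (d * (2 * t)) t := by
        simpa using (hasDerivAt_pow 2 t).const_mul d
      exact (ha.const_add (f a)).add hb
    exact h2.sub h1
  have hmono : MonotoneOn φ (Set.Icc (0:ℝ) 1) := by
    apply monotoneOn_of_deriv_nonneg (convex_Icc 0 1)
    · exact fun t _ => ((hφd t).differentiableAt).continuousAt.continuousWithinAt
    · exact fun t _ => ((hφd t).differentiableAt).differentiableWithinAt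
    · intro t ht
      rw [interior_Icc] at ht
      rw [(hφd t).deriv]
      have hin : ⟪f' (a + t • v) - f' a, v⟫ ≤ ‖f' (a + t • v) - f' a‖ * ‖v‖ :=
        real_inner_le_norm _ _
      have hl : ‖f' (a + t • v) - f' a‖ ≤ L * (t * ‖v‖) := by
        have := hlip (a + t • v) a
        simpa [norm_smul, abs_of_pos ht.1] using this
      have hsplit : ⟪f' (a + t • v) - f' a, v⟫ = ⟪f' (a + t • v), v⟫ - c := by
        rw [inner_sub_left, hc]
      have hvnn : (0:ℝ) ≤ ‖v‖ := norm_nonneg _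
      have hds : d * (2 * t) = L * (t * ‖v‖) * ‖v‖ := by rw [hd]; ring
      have := mul_le_mul_of_nonneg_right hl hvnn
      linarith [hin, hsplit.symm.le, hsplit.le]
  have h01 : φ 0 ≤ φ 1 := hmono (by norm_num) (by norm_num) zero_le_one
  have h0 : φ 0 = 0 := by simp [hφ]
  have h1 : φ 1 = f a + c + d - f b := by
    have hb : a + (1:ℝ) • v = b := by simp [hv]
    show f a + 1 * c + d * 1 ^ 2 - f (a + (1:ℝ) • v) = f a + c + d - f b
    rw [hb]; ring
  rw [h0, h1] at h01
  simp only [hc, hd, hv] at h01 ⊢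
  linarith

private lemma bh_bregman (f : E → ℝ) (f' : E → E) (L : ℝ) (hL : 0 < L)
    (hconv : ConvexOn ℝ Set.univ f)
    (hdiff : ∀ x : E, HasGradientAt f (f' x) x)
    (hlip : ∀ x y : E, ‖f' x - f' y‖ ≤ L * ‖x - y‖) (x y : E) :
    f x + ⟪f' x, y - x⟫ + 1 / (2 * L) * ‖f' y - f' x‖ ^ 2 ≤ f y := by
  set d : E := f' y - f' x with hd
  set z : E := y - (1 / L) • d with hz
  have hA := bh_first_order f f' hconv hdiff x z
  have hB := bh_descent f f' L hL hdiff hlip y z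
  have hzy : z - y = -((1 / L) • d) := by rw [hz]; abel
  have hzx : z - x = (y - x) - (1 / L) • d := by rw [hz]; abel
  have e1 : ⟪f' x, z - x⟫ = ⟪f' x, y - x⟫ - (1 / L) * ⟪f' x, d⟫ := by
    rw [hzx, inner_sub_right, real_inner_smul_right]
  have e2 : ⟪f' y, z - y⟫ = -((1 / L) * ⟪f' y, d⟫) := by
    rw [hzy, inner_neg_right, real_inner_smul_right]
  have e3 : ‖z - y‖ ^ 2 = (1 / L) ^ 2 * ‖d‖ ^ 2 := by
    rw [hzy, norm_neg, norm_smul]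
    rw [Real.norm_eq_abs, abs_of_pos (by positivity : (0:ℝ) < 1 / L)]
    ring
  have e4 : ⟪f' y, d⟫ - ⟪f' x, d⟫ = ‖d‖ ^ 2 := by
    rw [← inner_sub_left, ← hd, real_inner_self_eq_norm_sq]
  rw [e1] at hA
  rw [e2, e3] at hB
  have hL' : L ≠ 0 := ne_of_gt hL
  have key : f x + ⟪f' x, y - x⟫ - (1 / L) * ⟪f' x, d⟫ ≤
      f y - (1 / L) * ⟪f' y, d⟫ + L / 2 * ((1 / L) ^ 2 * ‖d‖ ^ 2) := by linarith
  have e5 : 1 / L * ⟪f' y, d⟫ - 1 / L * ⟪f' x, d⟫ = 1 / L * ‖d‖ ^ 2 := by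
    rw [← mul_sub, e4]
  have hfin : L / 2 * ((1 / L) ^ 2 * ‖d‖ ^ 2) = 1 / (2 * L) * ‖d‖ ^ 2 := by
    field_simp
  have h2L : 1 / (2 * L) + 1 / (2 * L) = 1 / L := by
    rw [← add_div, eq_div_iff (ne_of_gt hL), div_mul_eq_mul_div,
      div_eq_iff (by positivity : (2:ℝ) * L ≠ 0)]
    ring
  have e7 : 1 / L * ‖d‖ ^ 2 = 1 / (2 * L) * ‖d‖ ^ 2 + 1 / (2 * L) * ‖d‖ ^ 2 := by
    rw [← add_mul, h2L]
  linarith [key, e5, e7, hfin]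

end BH

/-- Baillon–Haddad theorem: the gradient of a convex differentiable function with
`L`-Lipschitz gradient is `(1/L)`-cocoercive. -/
theorem baillon_haddad
    {E : Type*} [NormedAddCommGroup E] [InnerProductSpace ℝ E] [CompleteSpace E]
    (f : E → ℝ) (f' : E → E) (L : ℝ) (hL : 0 < L)
    (hconv : ConvexOn ℝ Set.univ f)
    (hdiff : ∀ x : E, HasGradientAt f (f' x) x)
    (hlip : ∀ x y : E, ‖f' x - f' y‖ ≤ L * ‖x - y‖) :
    ∀ x y : E, (1 / L) * ‖f' x - f' y‖ ^ 2 ≤ ⟪f' x - f' y, x - y⟫ := by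
  intro x y
  have h1 := bh_bregman f f' L hL hconv hdiff hlip x y
  have h2 := bh_bregman f f' L hL hconv hdiff hlip y x
  have hnorm : ‖f' y - f' x‖ = ‖f' x - f' y‖ := norm_sub_rev _ _
  rw [hnorm] at h1
  have e1 : ⟪f' x - f' y, x - y⟫ = ⟪f' x, x - y⟫ - ⟪f' y, x - y⟫ := inner_sub_left _ _ _
  have e2 : ⟪f' x, y - x⟫ = -⟪f' x, x - y⟫ := by
    rw [show y - x = -(x - y) by abel, inner_neg_right]
  rw [e2] at h1
  have h2L : 1 / (2 * L) + 1 / (2 * L) = 1 / L := by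
    rw [← add_div, eq_div_iff (ne_of_gt hL), div_mul_eq_mul_div,
      div_eq_iff (by positivity : (2:ℝ) * L ≠ 0)]
    ring
  have e7 : 1 / L * ‖f' x - f' y‖ ^ 2
      = 1 / (2 * L) * ‖f' x - f' y‖ ^ 2 + 1 / (2 * L) * ‖f' x - f' y‖ ^ 2 := by
    rw [← add_mul, h2L]
  rw [e1]
  linarith [h1, h2, e7]
end

section
/- Let E be a real Hilbert space, f : E → ℝ be μ-strongly convex (μ > 0), differentiable, with L-Lipschitz gradient (μ ≤ L), and let g : E → ℝ be convex and lower semicontinuous. Fix a step size λ ∈ (0, 2/L), and let x* be a minimizer of f + g. Define the proximal gradient iterates by x_{k+1} = prox_{λg}(x_k − λ∇f(x_k)), i.e., x_{k+1} is the minimizer of z ↦ g(z) + (1/(2λ))‖z − (x_k − λ∇f(x_k))‖². Then for all k, ‖x_k − x*‖ ≤ ϱ^k ‖x₀ − x*‖, where ϱ = max(|1 − λL|, |1 − λμ|) < 1. -/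
open scoped RealInnerProductSpace
open Set

section ProxGradHelpers
variable {E : Type*} [NormedAddCommGroup E] [InnerProductSpace ℝ E] [CompleteSpace E]

private lemma line_hasDerivAt (φ : E → ℝ) (φ' : E → E)
    (hφ : ∀ x, HasGradientAt φ (φ' x) x) (a b : E) (t : ℝ) :
    HasDerivAt (fun s : ℝ => φ (a + s • (b - a))) ⟪φ' (a + t • (b - a)), b - a⟫ t := by
  have hc : HasDerivAt (fun s : ℝ => a + s • (b - a)) (b - a) t := by
    simpa using ((hasDerivAt_id t).smul_const (b - a)).const_add a
  have h := ((hφ (a + t • (b - a))).hasFDerivAt).comp_hasDerivAt t hc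
  simpa [Function.comp_def, InnerProductSpace.toDual_apply_apply] using h

private lemma grad_ineq (φ : E → ℝ) (φ' : E → E) (hconv : ConvexOn ℝ univ φ)
    (hφ : ∀ x, HasGradientAt φ (φ' x) x) (a b : E) :
    φ a + ⟪φ' a, b - a⟫ ≤ φ b := by
  have hψconv : ConvexOn ℝ univ (fun s : ℝ => φ (a + s • (b - a))) := by
    have h := hconv.comp_affineMap (AffineMap.lineMap a b : ℝ →ᵃ[ℝ] E)
    have he : (fun s : ℝ => φ (a + s • (b - a))) = φ ∘ (AffineMap.lineMap a b) := by
      funext s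
      show φ (a + s • (b - a)) = φ (AffineMap.lineMap a b s)
      rw [AffineMap.lineMap_apply_module', add_comm]
    rw [he]
    simpa using h
  have h0 : HasDerivAt (fun s : ℝ => φ (a + s • (b - a))) ⟪φ' a, b - a⟫ 0 := by
    have := line_hasDerivAt φ φ' hφ a b 0
    simpa using this
  have hs := hψconv.le_slope_of_hasDerivAt (mem_univ (0:ℝ)) (mem_univ (1:ℝ)) one_pos h0
  rw [slope_def_field] at hs
  simp at hs
  linarith

private lemma hasGradientAt_quad (c : ℝ) (x : E) :
    HasGradientAt (fun y : E => c / 2 * ‖y‖ ^ 2) (c • x) x := by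
  have h := (hasFDerivAt_id x).norm_sq
  rw [hasGradientAt_iff_hasFDerivAt]
  refine (h.const_mul (c/2)).congr_fderiv ?_
  ext y
  simp [InnerProductSpace.toDual_apply_apply, real_inner_smul_left, two_smul]
  ring

private lemma HasGradientAt.sub' {f g : E → ℝ} {f' g' x : E}
    (hf : HasGradientAt f f' x) (hg : HasGradientAt g g' x) :
    HasGradientAt (fun y => f y - g y) (f' - g') x := by
  rw [hasGradientAt_iff_hasFDerivAt] at *
  have h := hf.sub hg
  rw [map_sub]
  exact h

private lemma descent_lemma (φ : E → ℝ) (φ' : E → E) (ℓ : ℝ)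
    (hφ : ∀ x, HasGradientAt φ (φ' x) x)
    (hlip : ∀ x y, ‖φ' x - φ' y‖ ≤ ℓ * ‖x - y‖) (a b : E) :
    φ b ≤ φ a + ⟪φ' a, b - a⟫ + ℓ / 2 * ‖b - a‖ ^ 2 := by
  have hder : ∀ t : ℝ, HasDerivAt
      (fun s : ℝ => φ (a + s • (b - a)) - s * ⟪φ' a, b - a⟫ - s ^ 2 * (ℓ / 2 * ‖b - a‖ ^ 2))
      (⟪φ' (a + t • (b - a)), b - a⟫ - ⟪φ' a, b - a⟫ - 2 * t * (ℓ / 2 * ‖b - a‖ ^ 2)) t := by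
    intro t
    have h1 := line_hasDerivAt φ φ' hφ a b t
    have h2 : HasDerivAt (fun s : ℝ => s * ⟪φ' a, b - a⟫) ⟪φ' a, b - a⟫ t :=
      hasDerivAt_mul_const _
    have h3 : HasDerivAt (fun s : ℝ => s ^ 2 * (ℓ / 2 * ‖b - a‖ ^ 2))
        (2 * t * (ℓ / 2 * ‖b - a‖ ^ 2)) t := by
      have := (hasDerivAt_pow 2 t).mul_const (ℓ / 2 * ‖b - a‖ ^ 2)
      simpa [mul_comm] using this
    exact (h1.sub h2).sub h3
  have hmono : AntitoneOn
      (fun s : ℝ => φ (a + s • (b - a)) - s * ⟪φ' a, b - a⟫ - s ^ 2 * (ℓ / 2 * ‖b - a‖ ^ 2))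
      (Icc (0:ℝ) 1) := by
    apply antitoneOn_of_deriv_nonpos (convex_Icc 0 1)
    · exact fun t _ => ((hder t).differentiableAt).continuousAt.continuousWithinAt
    · exact fun t _ => ((hder t).differentiableAt).differentiableWithinAt
    · intro t ht
      rw [interior_Icc] at ht
      rw [(hder t).deriv]
      have h4 : ⟪φ' (a + t • (b - a)) - φ' a, b - a⟫ ≤ ℓ * (t * ‖b - a‖ ^ 2) := by
        calc ⟪φ' (a + t • (b - a)) - φ' a, b - a⟫
            ≤ ‖φ' (a + t • (b - a)) - φ' a‖ * ‖b - a‖ := real_inner_le_norm _ _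
          _ ≤ (ℓ * ‖(a + t • (b - a)) - a‖) * ‖b - a‖ := by
              exact mul_le_mul_of_nonneg_right (hlip _ _) (norm_nonneg _)
          _ = ℓ * (t * ‖b - a‖ ^ 2) := by
              rw [add_sub_cancel_left, norm_smul, Real.norm_eq_abs, abs_of_pos ht.1]
              ring
      have h5 : ⟪φ' (a + t • (b - a)), b - a⟫ - ⟪φ' a, b - a⟫
          = ⟪φ' (a + t • (b - a)) - φ' a, b - a⟫ := by
        rw [inner_sub_left]
      linarith [h4, h5.le, h5.ge]
  have h01 := hmono (left_mem_Icc.2 zero_le_one) (right_mem_Icc.2 zero_le_one) zero_le_one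
  have e1 : a + (1:ℝ) • (b - a) = b := by simp
  have e0 : a + (0:ℝ) • (b - a) = a := by simp
  simp only [e1, e0, one_mul, one_pow, zero_mul, pow_two, mul_zero, zero_mul, sub_zero] at h01
  linarith

private lemma cocoercive (φ : E → ℝ) (φ' : E → E) (ℓ : ℝ) (hℓ : 0 < ℓ)
    (hdesc : ∀ u z : E, φ z ≤ φ u + ⟪φ' u, z - u⟫ + ℓ / 2 * ‖z - u‖ ^ 2)
    (hgi : ∀ u z : E, φ u + ⟪φ' u, z - u⟫ ≤ φ z)
    (a b : E) : ‖φ' a - φ' b‖ ^ 2 ≤ ℓ * ⟪φ' a - φ' b, a - b⟫ := by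
  have key : ∀ u v : E, φ v + ⟪φ' v, u - v⟫ + 1/(2*ℓ) * ‖φ' u - φ' v‖^2 ≤ φ u := by
    intro u v
    set z : E := u - (1/ℓ) • (φ' u - φ' v) with hzdef
    have h1 := hgi v z
    have h2 := hdesc u z
    have hzu : z - u = -((1/ℓ) • (φ' u - φ' v)) := by rw [hzdef]; abel
    have hsplit : ⟪φ' v, z - v⟫ = ⟪φ' v, u - v⟫ + ⟪φ' v, z - u⟫ := by
      rw [← inner_add_right]
      congr 1
      abel
    have hJ : ⟪φ' u, z - u⟫ - ⟪φ' v, z - u⟫ = -(1/ℓ) * ‖φ' u - φ' v‖^2 := by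
      rw [← inner_sub_left, hzu, inner_neg_right, real_inner_smul_right,
        real_inner_self_eq_norm_sq]
      ring
    have hN : ℓ/2 * ‖z - u‖^2 = 1/(2*ℓ) * ‖φ' u - φ' v‖^2 := by
      rw [hzu, norm_neg, norm_smul, Real.norm_eq_abs, abs_of_pos (by positivity : (0:ℝ) < 1/ℓ),
        mul_pow]
      field_simp
    have hcomb : 1/(2*ℓ) * ‖φ' u - φ' v‖^2 + 1/(2*ℓ) * ‖φ' u - φ' v‖^2
        = (1/ℓ) * ‖φ' u - φ' v‖^2 := by
      field_simp
      ring
    linarith [h1, h2, hsplit.le, hsplit.ge, hJ.le, hJ.ge, hN.le, hN.ge]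
  have k1 := key a b
  have k2 := key b a
  have hrev : ‖φ' b - φ' a‖ = ‖φ' a - φ' b‖ := norm_sub_rev _ _
  rw [hrev] at k2
  have hi1 : ⟪φ' b, a - b⟫ + ⟪φ' a, b - a⟫ = -⟪φ' a - φ' b, a - b⟫ := by
    rw [inner_sub_left, show b - a = -(a - b) by abel, inner_neg_right]
    ring
  have hsum : (1/ℓ) * ‖φ' a - φ' b‖^2 ≤ ⟪φ' a - φ' b, a - b⟫ := by
    have hcomb : 1/(2*ℓ) * ‖φ' a - φ' b‖^2 + 1/(2*ℓ) * ‖φ' a - φ' b‖^2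
        = (1/ℓ) * ‖φ' a - φ' b‖^2 := by field_simp; ring
    linarith [k1, k2, hi1.le, hi1.ge]
  have hfin := mul_le_mul_of_nonneg_left hsum hℓ.le
  calc ‖φ' a - φ' b‖ ^ 2 = ℓ * ((1/ℓ) * ‖φ' a - φ' b‖^2) := by field_simp
    _ ≤ ℓ * ⟪φ' a - φ' b, a - b⟫ := hfin

private lemma prox_growth (g : E → ℝ) (hg : ConvexOn ℝ univ g) (c : ℝ) (hc : 0 < c)
    (u p : E) (hp : ∀ z, g p + c * ‖p - u‖^2 ≤ g z + c * ‖z - u‖^2) (z : E) :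
    g p + c * ‖p - u‖^2 + c * ‖z - p‖^2 ≤ g z + c * ‖z - u‖^2 := by
  have hkey : ∀ t : ℝ, 0 < t → t ≤ 1 →
      g p + c * ‖p - u‖^2 + c * (1 - t) * ‖z - p‖^2 ≤ g z + c * ‖z - u‖^2 := by
    intro t ht0 ht1
    have hw : p + t • (z - p) = (1 - t) • p + t • z := by
      rw [sub_smul, smul_sub, one_smul]; abel
    have hconv : g (p + t • (z - p)) ≤ (1 - t) * g p + t * g z := by
      rw [hw]
      exact hg.2 (mem_univ p) (mem_univ z) (by linarith) ht0.le (by ring)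
    have hid : ‖(p - u) + t • ((z - u) - (p - u))‖^2
        = (1 - t) * ‖p - u‖^2 + t * ‖z - u‖^2 - t * (1 - t) * ‖(z - u) - (p - u)‖^2 := by
      rw [norm_add_sq_real, real_inner_smul_right, inner_sub_right,
        real_inner_self_eq_norm_sq, norm_smul, Real.norm_eq_abs, mul_pow, sq_abs,
        norm_sub_sq_real (z - u) (p - u)]
      rw [real_inner_comm (z - u) (p - u)]
      ring
    have harg : (p + t • (z - p)) - u = (p - u) + t • ((z - u) - (p - u)) := by
      rw [show (z - u) - (p - u) = z - p by abel]
      abel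
    have hzp : (z - u) - (p - u) = z - p := by abel
    have S1 : g p + c * ‖p - u‖^2 ≤ g (p + t • (z - p))
        + c * ((1 - t) * ‖p - u‖^2 + t * ‖z - u‖^2 - t * (1 - t) * ‖z - p‖^2) := by
      have := hp (p + t • (z - p))
      rw [harg, hid, hzp] at this
      exact this
    have htmul : t * (g p + c * ‖p - u‖^2 + c * (1 - t) * ‖z - p‖^2)
        ≤ t * (g z + c * ‖z - u‖^2) := by nlinarith [S1, hconv]
    exact (mul_le_mul_iff_right₀ ht0).1 htmul
  by_cases hB : ‖z - p‖^2 = 0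
  · have := hkey 1 one_pos le_rfl
    rw [hB] at this ⊢
    simpa using this
  have hB' : 0 < ‖z - p‖^2 := lt_of_le_of_ne (by positivity) (Ne.symm hB)
  by_contra hcon
  push_neg at hcon
  have hεpos : 0 < g p + c * ‖p - u‖^2 + c * ‖z - p‖^2 - (g z + c * ‖z - u‖^2) := by linarith
  set ε := g p + c * ‖p - u‖^2 + c * ‖z - p‖^2 - (g z + c * ‖z - u‖^2) with hε
  have ht0 : 0 < min (1/2) (ε / (2 * (c * ‖z - p‖^2))) := lt_min (by norm_num) (by positivity)
  have ht1 : min (1/2) (ε / (2 * (c * ‖z - p‖^2))) ≤ 1 :=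
    le_trans (min_le_left _ _) (by norm_num)
  have h2 : c * min (1/2) (ε / (2 * (c * ‖z - p‖^2))) * ‖z - p‖^2 ≤ ε / 2 := by
    have hm : min (1/2) (ε / (2 * (c * ‖z - p‖^2))) ≤ ε / (2 * (c * ‖z - p‖^2)) :=
      min_le_right _ _
    calc c * min (1/2) (ε / (2 * (c * ‖z - p‖^2))) * ‖z - p‖^2
        ≤ c * (ε / (2 * (c * ‖z - p‖^2))) * ‖z - p‖^2 := by
          apply mul_le_mul_of_nonneg_right _ (by positivity)
          exact mul_le_mul_of_nonneg_left hm hc.le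
      _ = ε / 2 := by
          have hne : ‖z - p‖ ≠ 0 := fun h => by simp [h] at hB'
          field_simp
  have := hkey _ ht0 ht1
  nlinarith [this, h2]

private lemma prox_nonexpansive (g : E → ℝ) (hg : ConvexOn ℝ univ g) (c : ℝ) (hc : 0 < c)
    (u v p q : E) (hp : ∀ z, g p + c * ‖p - u‖^2 ≤ g z + c * ‖z - u‖^2)
    (hq : ∀ z, g q + c * ‖q - v‖^2 ≤ g z + c * ‖z - v‖^2) :
    ‖p - q‖ ≤ ‖u - v‖ := by
  have h1 := prox_growth g hg c hc u p hp q
  have h2 := prox_growth g hg c hc v q hq p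
  rw [show ‖q - p‖ = ‖p - q‖ from norm_sub_rev q p] at h1
  have hsum : c * (‖p - u‖^2 + ‖q - v‖^2 + 2 * ‖p - q‖^2)
      ≤ c * (‖q - u‖^2 + ‖p - v‖^2) := by linarith [h1, h2]
  have h3 : ‖p - u‖^2 + ‖q - v‖^2 + 2 * ‖p - q‖^2 ≤ ‖q - u‖^2 + ‖p - v‖^2 :=
    (mul_le_mul_iff_right₀ hc).1 hsum
  have i1 : ‖q - u‖^2 = ‖p - u‖^2 - 2 * ⟪p - u, p - q⟫ + ‖p - q‖^2 := by
    rw [show q - u = (p - u) - (p - q) by abel, norm_sub_sq_real]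
  have i2 : ‖p - v‖^2 = ‖q - v‖^2 + 2 * ⟪q - v, p - q⟫ + ‖p - q‖^2 := by
    rw [show p - v = (q - v) + (p - q) by abel, norm_add_sq_real]
  have i3 : ⟪q - v, p - q⟫ - ⟪p - u, p - q⟫ = ⟪u - v, p - q⟫ - ‖p - q‖^2 := by
    rw [← inner_sub_left, show (q - v) - (p - u) = (u - v) - (p - q) by abel,
      inner_sub_left, real_inner_self_eq_norm_sq]
  have h4 : ‖p - q‖^2 ≤ ⟪u - v, p - q⟫ := by linarith [i1.le, i1.ge, i2.le, i2.ge, i3.le, i3.ge]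
  have h5 : ⟪u - v, p - q⟫ ≤ ‖u - v‖ * ‖p - q‖ := real_inner_le_norm _ _
  rcases eq_or_lt_of_le (norm_nonneg (p - q)) with h0 | h0
  · rw [← h0]; exact norm_nonneg _
  · have : ‖p - q‖ * ‖p - q‖ ≤ ‖u - v‖ * ‖p - q‖ := by nlinarith [h4, h5]
    exact le_of_mul_le_mul_right this h0

end ProxGradHelpers

set_option maxHeartbeats 1000000 in
/-- Linear convergence of proximal gradient descent for a strongly convex smooth term
plus a convex lower semicontinuous term. -/
theorem prox_grad_linear_convergence
    {E : Type*} [NormedAddCommGroup E] [InnerProductSpace ℝ E] [CompleteSpace E]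
    (f g : E → ℝ) (f' : E → E) (mu L lam : ℝ)
    (hmu : 0 < mu) (hL : 0 < L) (hmuL : mu ≤ L)
    (hstrong : ConvexOn ℝ Set.univ (fun x => f x - (mu / 2) * ‖x‖ ^ 2))
    (hdiff : ∀ x : E, HasGradientAt f (f' x) x)
    (hlip : ∀ x y : E, ‖f' x - f' y‖ ≤ L * ‖x - y‖)
    (hg : ConvexOn ℝ Set.univ g) (hglsc : LowerSemicontinuous g)
    (hlam : lam ∈ Set.Ioo 0 (2 / L))
    (xstar : E) (hmin : ∀ z : E, f xstar + g xstar ≤ f z + g z)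
    (x : ℕ → E)
    (hiter : ∀ (k : ℕ) (z : E),
      g (x (k + 1)) + (1 / (2 * lam)) * ‖x (k + 1) - (x k - lam • f' (x k))‖ ^ 2
        ≤ g z + (1 / (2 * lam)) * ‖z - (x k - lam • f' (x k))‖ ^ 2) :
    max |1 - lam * L| |1 - lam * mu| < 1 ∧
      ∀ k : ℕ, ‖x k - xstar‖ ≤ (max |1 - lam * L| |1 - lam * mu|) ^ k * ‖x 0 - xstar‖ := by
  obtain ⟨hlam0, hlam2⟩ := hlam
  have hlamL : lam * L < 2 := by
    rw [lt_div_iff₀ hL] at hlam2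
    linarith
  have hlammu : 0 < lam * mu := mul_pos hlam0 hmu
  have hlammuL : lam * mu ≤ lam * L := mul_le_mul_of_nonneg_left hmuL hlam0.le
  have hrho1 : max |1 - lam * L| |1 - lam * mu| < 1 := by
    apply max_lt
    · rw [abs_lt]
      constructor <;> nlinarith [mul_pos hlam0 hL]
    · rw [abs_lt]
      constructor <;> nlinarith
  refine ⟨hrho1, ?_⟩
  set ϱ := max |1 - lam * L| |1 - lam * mu| with hϱ
  have hϱ0 : 0 ≤ ϱ := le_trans (abs_nonneg _) (le_max_left _ _)
  -- gradient of h := f - mu/2 ‖·‖²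
  have hgradh : ∀ y : E, HasGradientAt (fun z => f z - mu / 2 * ‖z‖ ^ 2) (f' y - mu • y) y :=
    fun y => (hdiff y).sub' (hasGradientAt_quad mu y)
  have hgi : ∀ u z : E, (f u - mu / 2 * ‖u‖ ^ 2) + ⟪f' u - mu • u, z - u⟫
      ≤ f z - mu / 2 * ‖z‖ ^ 2 :=
    fun u z => grad_ineq (fun w => f w - mu / 2 * ‖w‖ ^ 2) (fun w => f' w - mu • w)
      hstrong hgradh u z
  -- strong monotonicity
  have hsm : ∀ a b : E, mu * ‖a - b‖ ^ 2 ≤ ⟪f' a - f' b, a - b⟫ := by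
    intro a b
    have g1 := hgi a b
    have g2 := hgi b a
    have e1 : ⟪f' a - mu • a, b - a⟫ = -⟪f' a - mu • a, a - b⟫ := by
      rw [show b - a = -(a - b) by abel, inner_neg_right]
    have e2 : ⟪f' a - mu • a, a - b⟫ - ⟪f' b - mu • b, a - b⟫
        = ⟪f' a - f' b, a - b⟫ - mu * ‖a - b‖ ^ 2 := by
      rw [← inner_sub_left, show (f' a - mu • a) - (f' b - mu • b)
        = (f' a - f' b) - mu • (a - b) by rw [smul_sub]; abel, inner_sub_left,
        real_inner_smul_left, real_inner_self_eq_norm_sq]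
    linarith [g1, g2, e1.le, e1.ge, e2.le, e2.ge]
  -- descent lemma for f, transferred to h
  have hdescf := descent_lemma f f' L hdiff hlip
  have hdesch : ∀ u z : E, (f z - mu / 2 * ‖z‖ ^ 2) ≤ (f u - mu / 2 * ‖u‖ ^ 2)
      + ⟪f' u - mu • u, z - u⟫ + (L - mu) / 2 * ‖z - u‖ ^ 2 := by
    intro u z
    have hd := hdescf u z
    have e := norm_add_sq_real u (z - u)
    rw [show u + (z - u) = z by abel] at e
    have e2 : mu / 2 * ‖z‖ ^ 2 = mu / 2 * ‖u‖ ^ 2 + mu * ⟪u, z - u⟫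
        + mu / 2 * ‖z - u‖ ^ 2 := by rw [e]; ring
    have e3 : ⟪f' u - mu • u, z - u⟫ = ⟪f' u, z - u⟫ - mu * ⟪u, z - u⟫ := by
      rw [inner_sub_left, real_inner_smul_left]
    linarith [hd, e2.le, e2.ge, e3.le, e3.ge]
  -- combined inequality
  have hkeyC : ∀ a b : E, mu * L * ‖a - b‖ ^ 2 + ‖f' a - f' b‖ ^ 2
      ≤ (mu + L) * ⟪f' a - f' b, a - b⟫ := by
    intro a b
    have ediff : (f' a - mu • a) - (f' b - mu • b) = (f' a - f' b) - mu • (a - b) := by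
      rw [smul_sub]; abel
    rcases eq_or_lt_of_le hmuL with heq | hlt
    · -- mu = L
      have hlab := hlip a b
      rw [← heq] at hlab
      have hB : ‖f' a - f' b‖ ^ 2 ≤ mu ^ 2 * ‖a - b‖ ^ 2 := by
        have := pow_le_pow_left₀ (norm_nonneg _) hlab 2
        rw [mul_pow] at this
        linarith [this]
      have hC := hsm a b
      have hmC : 0 ≤ mu * (⟪f' a - f' b, a - b⟫ - mu * ‖a - b‖ ^ 2) :=
        mul_nonneg hmu.le (by linarith)
      rw [← heq]
      nlinarith [hB, hmC]
    · -- mu < L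
      have hco := cocoercive (fun w => f w - mu / 2 * ‖w‖ ^ 2) (fun w => f' w - mu • w)
        (L - mu) (by linarith) hdesch hgi a b
      rw [ediff] at hco
      have e1 : ‖(f' a - f' b) - mu • (a - b)‖ ^ 2 = ‖f' a - f' b‖ ^ 2
          - 2 * (mu * ⟪f' a - f' b, a - b⟫) + mu ^ 2 * ‖a - b‖ ^ 2 := by
        rw [norm_sub_sq_real, real_inner_smul_right, norm_smul, Real.norm_eq_abs,
          mul_pow, sq_abs]
      have e2 : ⟪(f' a - f' b) - mu • (a - b), a - b⟫
          = ⟪f' a - f' b, a - b⟫ - mu * ‖a - b‖ ^ 2 := by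
        rw [inner_sub_left, real_inner_smul_left, real_inner_self_eq_norm_sq]
      rw [e1, e2] at hco
      nlinarith [hco]
  -- contraction of the gradient step
  have hcontr : ∀ a b : E, ‖(a - lam • f' a) - (b - lam • f' b)‖ ≤ ϱ * ‖a - b‖ := by
    intro a b
    have hde : (a - lam • f' a) - (b - lam • f' b) = (a - b) - lam • (f' a - f' b) := by
      rw [smul_sub]; abel
    have hnorm : ‖(a - b) - lam • (f' a - f' b)‖ ^ 2 = ‖a - b‖ ^ 2
        - 2 * (lam * ⟪f' a - f' b, a - b⟫) + lam ^ 2 * ‖f' a - f' b‖ ^ 2 := by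
      rw [norm_sub_sq_real, real_inner_smul_right, norm_smul, Real.norm_eq_abs,
        mul_pow, sq_abs, real_inner_comm]
    have hA := hkeyC a b
    have hBL : ‖f' a - f' b‖ ^ 2 ≤ L ^ 2 * ‖a - b‖ ^ 2 := by
      have := pow_le_pow_left₀ (norm_nonneg (f' a - f' b)) (hlip a b) 2
      rw [mul_pow] at this
      linarith [this]
    have hBm : mu ^ 2 * ‖a - b‖ ^ 2 ≤ ‖f' a - f' b‖ ^ 2 := by
      rcases eq_or_lt_of_le (norm_nonneg (a - b)) with h0 | h0
      · rw [← h0]; simpa using sq_nonneg ‖f' a - f' b‖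
      · have hmd : mu * ‖a - b‖ ≤ ‖f' a - f' b‖ := by
          have hCS := real_inner_le_norm (f' a - f' b) (a - b)
          have := hsm a b
          have hmul : mu * ‖a - b‖ * ‖a - b‖ ≤ ‖f' a - f' b‖ * ‖a - b‖ := by nlinarith
          exact le_of_mul_le_mul_right hmul h0
        have := pow_le_pow_left₀ (by positivity : (0:ℝ) ≤ mu * ‖a - b‖) hmd 2
        rw [mul_pow] at this
        linarith [this]
    have hmuLpos : 0 < mu + L := by linarith
    have hsq : ‖(a - b) - lam • (f' a - f' b)‖ ^ 2 ≤ ϱ ^ 2 * ‖a - b‖ ^ 2 := by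
      rcases le_or_gt (lam * (mu + L)) 2 with hcase | hcase
      · have hstep : ‖(a - b) - lam • (f' a - f' b)‖ ^ 2
            ≤ (1 - lam * mu) ^ 2 * ‖a - b‖ ^ 2 := by
          have h1 : 0 ≤ lam * ((mu + L) * ⟪f' a - f' b, a - b⟫
              - (mu * L * ‖a - b‖ ^ 2 + ‖f' a - f' b‖ ^ 2)) :=
            mul_nonneg hlam0.le (by linarith)
          have h2 : 0 ≤ lam * (2 - lam * (mu + L))
              * (‖f' a - f' b‖ ^ 2 - mu ^ 2 * ‖a - b‖ ^ 2) :=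
            mul_nonneg (mul_nonneg hlam0.le (by linarith)) (by linarith)
          have hM : (mu + L) * (‖(a - b) - lam • (f' a - f' b)‖ ^ 2)
              ≤ (mu + L) * ((1 - lam * mu) ^ 2 * ‖a - b‖ ^ 2) := by
            rw [hnorm]
            linarith [h1, h2]
          exact (mul_le_mul_iff_right₀ hmuLpos).1 hM
        have hle : (1 - lam * mu) ^ 2 ≤ ϱ ^ 2 := by
          rw [← sq_abs (1 - lam * mu)]
          exact pow_le_pow_left₀ (abs_nonneg _) (le_max_right _ _) 2
        calc ‖(a - b) - lam • (f' a - f' b)‖ ^ 2 ≤ (1 - lam * mu) ^ 2 * ‖a - b‖ ^ 2 := hstep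
          _ ≤ ϱ ^ 2 * ‖a - b‖ ^ 2 := mul_le_mul_of_nonneg_right hle (by positivity)
      · have hstep : ‖(a - b) - lam • (f' a - f' b)‖ ^ 2
            ≤ (1 - lam * L) ^ 2 * ‖a - b‖ ^ 2 := by
          have h1 : 0 ≤ lam * ((mu + L) * ⟪f' a - f' b, a - b⟫
              - (mu * L * ‖a - b‖ ^ 2 + ‖f' a - f' b‖ ^ 2)) :=
            mul_nonneg hlam0.le (by linarith)
          have h2 : 0 ≤ lam * (lam * (mu + L) - 2)
              * (L ^ 2 * ‖a - b‖ ^ 2 - ‖f' a - f' b‖ ^ 2) :=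
            mul_nonneg (mul_nonneg hlam0.le (by linarith)) (by linarith)
          have hM : (mu + L) * (‖(a - b) - lam • (f' a - f' b)‖ ^ 2)
              ≤ (mu + L) * ((1 - lam * L) ^ 2 * ‖a - b‖ ^ 2) := by
            rw [hnorm]
            linarith [h1, h2]
          exact (mul_le_mul_iff_right₀ hmuLpos).1 hM
        have hle : (1 - lam * L) ^ 2 ≤ ϱ ^ 2 := by
          rw [← sq_abs (1 - lam * L)]
          exact pow_le_pow_left₀ (abs_nonneg _) (le_max_left _ _) 2
        calc ‖(a - b) - lam • (f' a - f' b)‖ ^ 2 ≤ (1 - lam * L) ^ 2 * ‖a - b‖ ^ 2 := hstep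
          _ ≤ ϱ ^ 2 * ‖a - b‖ ^ 2 := mul_le_mul_of_nonneg_right hle (by positivity)
    rw [hde]
    have hs := Real.sqrt_le_sqrt hsq
    rw [show ϱ ^ 2 * ‖a - b‖ ^ 2 = (ϱ * ‖a - b‖) ^ 2 by ring] at hs
    rw [Real.sqrt_sq (norm_nonneg _), Real.sqrt_sq (by positivity)] at hs
    exact hs
  -- first-order optimality at xstar
  have hkey0 : ∀ z : E, g xstar ≤ g z + ⟪f' xstar, z - xstar⟫ := by
    intro z
    have hψ0 : HasDerivAt (fun s : ℝ => f (xstar + s • (z - xstar)))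
        ⟪f' xstar, z - xstar⟫ 0 := by
      have := line_hasDerivAt f f' hdiff xstar z 0
      simpa using this
    have hslope : Filter.Tendsto (slope (fun s : ℝ => f (xstar + s • (z - xstar))) 0)
        (nhdsWithin 0 (Set.Ioi 0)) (nhds ⟪f' xstar, z - xstar⟫) := by
      refine (hasDerivAt_iff_tendsto_slope.1 hψ0).mono_left (nhdsWithin_mono 0 ?_)
      intro t ht
      exact ne_of_gt ht
    have hev : ∀ᶠ t in nhdsWithin (0:ℝ) (Set.Ioi 0),
        g xstar - g z ≤ slope (fun s : ℝ => f (xstar + s • (z - xstar))) 0 t := by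
      filter_upwards [Ioc_mem_nhdsGT_of_mem (Set.mem_Ico.2 ⟨le_refl (0:ℝ), zero_lt_one⟩)]
      intro t ht
      obtain ⟨ht0, ht1⟩ := ht
      have hw : xstar + t • (z - xstar) = (1 - t) • xstar + t • z := by
        rw [sub_smul, smul_sub, one_smul]; abel
      have hconv : g (xstar + t • (z - xstar)) ≤ (1 - t) * g xstar + t * g z := by
        rw [hw]
        exact hg.2 (Set.mem_univ xstar) (Set.mem_univ z) (by linarith) ht0.le (by ring)
      have hm := hmin (xstar + t • (z - xstar))
      rw [slope_def_field]
      simp only [sub_zero, zero_smul, add_zero]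
      rw [le_div_iff₀ ht0]
      nlinarith [hm, hconv]
    have := ge_of_tendsto hslope hev
    linarith [this]
  -- xstar is a fixed point of the prox-gradient step
  have hstar : ∀ z : E, g xstar
      + (1 / (2 * lam)) * ‖xstar - (xstar - lam • f' xstar)‖ ^ 2
      ≤ g z + (1 / (2 * lam)) * ‖z - (xstar - lam • f' xstar)‖ ^ 2 := by
    intro z
    have e1 : ‖z - (xstar - lam • f' xstar)‖ ^ 2 = ‖z - xstar‖ ^ 2
        + 2 * (lam * ⟪f' xstar, z - xstar⟫) + ‖lam • f' xstar‖ ^ 2 := by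
      rw [show z - (xstar - lam • f' xstar) = (z - xstar) + lam • f' xstar by abel,
        norm_add_sq_real, real_inner_smul_right, real_inner_comm]
    have e2 : ‖xstar - (xstar - lam • f' xstar)‖ ^ 2 = ‖lam • f' xstar‖ ^ 2 := by
      rw [show xstar - (xstar - lam • f' xstar) = lam • f' xstar by abel]
    have hcl : (1 / (2 * lam)) * (2 * (lam * ⟪f' xstar, z - xstar⟫))
        = ⟪f' xstar, z - xstar⟫ := by
      field_simp
    have hnn : 0 ≤ (1 / (2 * lam)) * ‖z - xstar‖ ^ 2 := by positivity
    rw [e1, e2]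
    have hk := hkey0 z
    nlinarith [hk, hcl, hnn]
  -- main induction
  intro k
  induction k with
  | zero => simp
  | succ k ih =>
    have step1 : ‖x (k + 1) - xstar‖
        ≤ ‖(x k - lam • f' (x k)) - (xstar - lam • f' xstar)‖ :=
      prox_nonexpansive g hg (1 / (2 * lam)) (by positivity)
        (x k - lam • f' (x k)) (xstar - lam • f' xstar) (x (k + 1)) xstar
        (hiter k) hstar
    have step2 := hcontr (x k) xstar
    calc ‖x (k + 1) - xstar‖ ≤ ϱ * ‖x k - xstar‖ := step1.trans step2
      _ ≤ ϱ * (ϱ ^ k * ‖x 0 - xstar‖) := mul_le_mul_of_nonneg_left ih hϱ0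
      _ = ϱ ^ (k + 1) * ‖x 0 - xstar‖ := by ring
end

section
/- Let E be a real Hilbert space, f : E → ℝ convex and differentiable with L-Lipschitz gradient (L > 0), and g : E → ℝ convex and lower semicontinuous. Fix λ ∈ (0, 1/L], let x* be a minimizer of f + g, and define the proximal gradient iterates by x_{k+1} = prox_{λg}(x_k − λ∇f(x_k)). Then for all k ≥ 1, (f + g)(x_k) − (f + g)(x*) ≤ ‖x₀ − x*‖² / (2λk); in particular the objective error decays as O(1/k). -/
open scoped RealInnerProductSpace

section ProxGradAux

open Set InnerProductSpace

variable {E : Type*} [NormedAddCommGroup E] [InnerProductSpace ℝ E] [CompleteSpace E]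

lemma pg_line_hasDerivAt {f : E → ℝ} {f' : E → E}
    (hdiff : ∀ x : E, HasGradientAt f (f' x) x) (x d : E) (t : ℝ) :
    HasDerivAt (fun s : ℝ => f (x + s • d)) ⟪f' (x + t • d), d⟫ t := by
  have hγ : HasDerivAt (fun s : ℝ => x + s • d) d t := by
    simpa using ((hasDerivAt_id t).smul_const d).const_add x
  have h := ((hdiff (x + t • d)).hasFDerivAt.comp_hasDerivAt t hγ)
  simpa [InnerProductSpace.toDual_apply_apply, Function.comp_def] using h

/-- convex gradient inequality -/
lemma pg_convex_grad {f : E → ℝ} {f' : E → E}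
    (hf : ConvexOn ℝ Set.univ f) (hdiff : ∀ x : E, HasGradientAt f (f' x) x)
    (x z : E) : ⟪f' x, z - x⟫ ≤ f z - f x := by
  set d := z - x with hd
  have hder : HasDerivAt (fun s : ℝ => f (x + s • d)) ⟪f' x, d⟫ 0 := by
    have := pg_line_hasDerivAt hdiff x d 0
    simpa using this
  have htend : Filter.Tendsto (slope (fun s : ℝ => f (x + s • d)) 0)
      (nhdsWithin 0 (Set.Ioi 0)) (nhds ⟪f' x, d⟫) := by
    have := hasDerivAt_iff_tendsto_slope.1 hder
    exact this.mono_left (nhdsWithin_mono _ (fun t ht => ne_of_gt ht))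
  refine le_of_tendsto htend ?_
  filter_upwards [Ioc_mem_nhdsGT_of_mem (Set.left_mem_Ico.2 one_pos)] with t ht
  have h1 : f (x + t • d) ≤ (1 - t) * f x + t * f z := by
    have hcomb := hf.2 (Set.mem_univ x) (Set.mem_univ z)
      (by linarith [ht.2] : (0:ℝ) ≤ 1 - t) (le_of_lt ht.1) (by ring)
    have heq : (1 - t) • x + t • z = x + t • d := by
      simp [hd, smul_sub, sub_smul]; abel
    rw [heq] at hcomb
    simpa using hcomb
  have hsl : slope (fun s : ℝ => f (x + s • d)) 0 t = (f (x + t • d) - f x) / t := by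
    simp [slope_def_field]
  rw [hsl, div_le_iff₀ ht.1]
  nlinarith [ht.1]

/-- descent lemma -/
lemma pg_descent {f : E → ℝ} {f' : E → E} {L : ℝ}
    (hdiff : ∀ x : E, HasGradientAt f (f' x) x)
    (hlip : ∀ x y : E, ‖f' x - f' y‖ ≤ L * ‖x - y‖)
    (x y : E) : f y ≤ f x + ⟪f' x, y - x⟫ + L / 2 * ‖y - x‖ ^ 2 := by
  set d := y - x with hd
  set ψ : ℝ → ℝ := fun t => f (x + t • d) - t * ⟪f' x, d⟫ - L / 2 * t ^ 2 * ‖d‖ ^ 2 with hψ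
  have hderiv : ∀ t : ℝ, HasDerivAt ψ
      (⟪f' (x + t • d), d⟫ - ⟪f' x, d⟫ - L * t * ‖d‖ ^ 2) t := by
    intro t
    have h1 := pg_line_hasDerivAt hdiff x d t
    have h2 : HasDerivAt (fun s : ℝ => s * ⟪f' x, d⟫) ⟪f' x, d⟫ t := by
      simpa using (hasDerivAt_id t).mul_const ⟪f' x, d⟫
    have h3 : HasDerivAt (fun s : ℝ => L / 2 * s ^ 2 * ‖d‖ ^ 2) (L * t * ‖d‖ ^ 2) t := by
      have := ((hasDerivAt_pow 2 t).const_mul (L / 2)).mul_const (‖d‖ ^ 2)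
      rw [show L * t * ‖d‖ ^ 2 = L / 2 * (((2:ℕ):ℝ) * t ^ (2 - 1)) * ‖d‖ ^ 2 by push_cast; ring]
      exact this
    exact (h1.sub h2).sub h3
  have hanti : AntitoneOn ψ (Set.Icc (0:ℝ) 1) := by
    apply antitoneOn_of_deriv_nonpos (convex_Icc 0 1)
    · exact Continuous.continuousOn (by
        have : Differentiable ℝ ψ := fun t => (hderiv t).differentiableAt
        exact this.continuous)
    · intro t ht
      exact (hderiv t).differentiableAt.differentiableWithinAt
    · intro t ht
      rw [interior_Icc] at ht
      rw [(hderiv t).deriv]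
      have hb : ⟪f' (x + t • d) - f' x, d⟫ ≤ L * t * ‖d‖ ^ 2 := by
        calc ⟪f' (x + t • d) - f' x, d⟫ ≤ ‖f' (x + t • d) - f' x‖ * ‖d‖ :=
              real_inner_le_norm _ _
          _ ≤ (L * ‖(x + t • d) - x‖) * ‖d‖ :=
              mul_le_mul_of_nonneg_right (hlip _ _) (norm_nonneg d)
          _ = L * t * ‖d‖ ^ 2 := by
              simp [norm_smul, abs_of_pos ht.1]; ring
      rw [inner_sub_left] at hb
      linarith
  have h01 := hanti (Set.left_mem_Icc.2 zero_le_one) (Set.right_mem_Icc.2 zero_le_one)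
    zero_le_one
  simp only [hψ, zero_smul, add_zero, one_smul, zero_mul, one_pow, mul_one] at h01
  have : x + d = y := by simp [hd]
  rw [this] at h01
  nlinarith [h01]

/-- variational inequality for the prox point -/
lemma pg_prox_ineq {g : E → ℝ} (hg : ConvexOn ℝ Set.univ g) {lam : ℝ} (hlam : 0 < lam)
    (p v : E)
    (hp : ∀ z : E, g p + (1 / (2 * lam)) * ‖p - v‖ ^ 2 ≤ g z + (1 / (2 * lam)) * ‖z - v‖ ^ 2)
    (z : E) : g p ≤ g z + (1 / lam) * ⟪p - v, z - p⟫ := by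
  set I := ⟪p - v, z - p⟫ with hI
  set N := ‖z - p‖ ^ 2 with hN
  set c := 1 / (2 * lam) with hc
  have hcpos : 0 < c := by positivity
  have key : ∀ t ∈ Set.Ioc (0:ℝ) 1, g p ≤ g z + (1 / lam) * I + t * (c * N) := by
    intro t ht
    have hzt : (1 - t) • p + t • z = p + t • (z - p) := by
      simp [smul_sub, sub_smul]; abel
    have hconv : g (p + t • (z - p)) ≤ (1 - t) * g p + t * g z := by
      have := hg.2 (Set.mem_univ p) (Set.mem_univ z)
        (by linarith [ht.2] : (0:ℝ) ≤ 1 - t) (le_of_lt ht.1) (by ring)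
      rw [hzt] at this; simpa using this
    have hexp : ‖(p + t • (z - p)) - v‖ ^ 2 = ‖p - v‖ ^ 2 + 2 * (t * I) + t ^ 2 * N := by
      have h1 : (p + t • (z - p)) - v = (p - v) + t • (z - p) := by abel
      rw [h1, norm_add_sq_real, real_inner_smul_right, norm_smul, Real.norm_eq_abs,
        mul_pow, sq_abs]
    have hp' := hp (p + t • (z - p))
    rw [hexp] at hp'
    have hstep : t * g p ≤ t * (g z + 2 * c * I + t * (c * N)) := by nlinarith
    have hdiv : g p ≤ g z + 2 * c * I + t * (c * N) := le_of_mul_le_mul_left hstep ht.1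
    have hcc : (1:ℝ) / lam = 2 * c := by rw [hc]; field_simp
    rw [hcc]; linarith
  have htend : Filter.Tendsto (fun t : ℝ => g z + (1 / lam) * I + t * (c * N))
      (nhdsWithin 0 (Set.Ioi 0)) (nhds (g z + (1 / lam) * I)) := by
    have h0 : Filter.Tendsto (fun t : ℝ => g z + (1 / lam) * I + t * (c * N))
        (nhds 0) (nhds (g z + (1 / lam) * I + 0 * (c * N))) :=
      Continuous.tendsto (by continuity) 0
    simpa using h0.mono_left nhdsWithin_le_nhds
  refine ge_of_tendsto htend ?_
  filter_upwards [Ioc_mem_nhdsGT_of_mem (Set.left_mem_Ico.2 one_pos)] with t ht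
  exact key t ht

/-- key one-step estimate -/
lemma pg_key {f g : E → ℝ} {f' : E → E} {L lam : ℝ} (hL : 0 < L)
    (hf : ConvexOn ℝ Set.univ f)
    (hdiff : ∀ x : E, HasGradientAt f (f' x) x)
    (hlip : ∀ x y : E, ‖f' x - f' y‖ ≤ L * ‖x - y‖)
    (hg : ConvexOn ℝ Set.univ g)
    (hlam : lam ∈ Set.Ioc 0 (1 / L))
    (xk p : E)
    (hp : ∀ z : E, g p + (1 / (2 * lam)) * ‖p - (xk - lam • f' xk)‖ ^ 2
        ≤ g z + (1 / (2 * lam)) * ‖z - (xk - lam • f' xk)‖ ^ 2)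
    (z : E) :
    f p + g p + (1 / (2 * lam)) * ‖p - z‖ ^ 2
      ≤ f z + g z + (1 / (2 * lam)) * ‖xk - z‖ ^ 2 := by
  obtain ⟨hl0, hlL⟩ := hlam
  have hLlam : L * lam ≤ 1 := by
    rw [le_div_iff₀ hL] at hlL; linarith [hlL]
  have hA : ⟪f' xk, z - xk⟫ ≤ f z - f xk := pg_convex_grad hf hdiff xk z
  have hB : f p ≤ f xk + ⟪f' xk, p - xk⟫ + L / 2 * ‖p - xk‖ ^ 2 := pg_descent hdiff hlip xk p
  have hC : g p ≤ g z + (1 / lam) * ⟪p - (xk - lam • f' xk), z - p⟫ :=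
    pg_prox_ineq hg hl0 p _ hp z
  -- decompose the inner product in hC
  have hdecomp : ⟪p - (xk - lam • f' xk), z - p⟫
      = ⟪p - xk, z - p⟫ + lam * ⟪f' xk, z - p⟫ := by
    have : p - (xk - lam • f' xk) = (p - xk) + lam • f' xk := by abel
    rw [this, inner_add_left, real_inner_smul_left]
  have hsplit : ⟪f' xk, z - p⟫ = ⟪f' xk, z - xk⟫ - ⟪f' xk, p - xk⟫ := by
    rw [← inner_sub_right]; congr 1; abel
  have hnorm : ‖xk - z‖ ^ 2 = ‖p - xk‖ ^ 2 + 2 * ⟪p - xk, z - p⟫ + ‖p - z‖ ^ 2 := by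
    have h1 : xk - z = (xk - p) + (p - z) := by abel
    rw [h1, norm_add_sq_real]
    have h2 : ⟪xk - p, p - z⟫ = ⟪p - xk, z - p⟫ := by
      rw [show xk - p = -(p - xk) by abel, show p - z = -(z - p) by abel, inner_neg_neg]
    rw [h2, norm_sub_rev xk p]
  rw [hdecomp, hsplit] at hC
  have hCexp : (1:ℝ) / lam * (⟪p - xk, z - p⟫ + lam * (⟪f' xk, z - xk⟫ - ⟪f' xk, p - xk⟫))
      = 2 * (1 / (2 * lam)) * ⟪p - xk, z - p⟫ + (⟪f' xk, z - xk⟫ - ⟪f' xk, p - xk⟫) := by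
    field_simp
  rw [hCexp] at hC
  have hLle : L / 2 ≤ 1 / (2 * lam) := by
    rw [div_le_div_iff₀ (by norm_num) (by positivity)]
    nlinarith
  have hsq : (0:ℝ) ≤ ‖p - xk‖ ^ 2 := sq_nonneg _
  have hfinal := mul_le_mul_of_nonneg_right hLle hsq
  rw [hnorm]
  nlinarith [hA, hB, hC, hfinal]

end ProxGradAux

/-- `O(1/k)` objective convergence of proximal gradient descent in the convex case. -/
theorem prox_grad_objective_convergence
    {E : Type*} [NormedAddCommGroup E] [InnerProductSpace ℝ E] [CompleteSpace E]
    (f g : E → ℝ) (f' : E → E) (L lam : ℝ) (hL : 0 < L)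
    (hf : ConvexOn ℝ Set.univ f)
    (hdiff : ∀ x : E, HasGradientAt f (f' x) x)
    (hlip : ∀ x y : E, ‖f' x - f' y‖ ≤ L * ‖x - y‖)
    (hg : ConvexOn ℝ Set.univ g) (hglsc : LowerSemicontinuous g)
    (hlam : lam ∈ Set.Ioc 0 (1 / L))
    (xstar : E) (hmin : ∀ z : E, f xstar + g xstar ≤ f z + g z)
    (x : ℕ → E)
    (hiter : ∀ (k : ℕ) (z : E),
      g (x (k + 1)) + (1 / (2 * lam)) * ‖x (k + 1) - (x k - lam • f' (x k))‖ ^ 2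
        ≤ g z + (1 / (2 * lam)) * ‖z - (x k - lam • f' (x k))‖ ^ 2) :
    ∀ k : ℕ, 1 ≤ k →
      (f (x k) + g (x k)) - (f xstar + g xstar) ≤ ‖x 0 - xstar‖ ^ 2 / (2 * lam * k) := by
  have hl0 := hlam.1
  set c : ℝ := 1 / (2 * lam) with hc
  have hcpos : 0 < c := by positivity
  set φ : ℕ → ℝ := fun k => f (x k) + g (x k) with hφ
  set Fs : ℝ := f xstar + g xstar with hFs
  have hkey : ∀ (k : ℕ) (z : E),
      φ (k + 1) + c * ‖x (k + 1) - z‖ ^ 2 ≤ f z + g z + c * ‖x k - z‖ ^ 2 := by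
    intro k z
    exact pg_key hL hf hdiff hlip hg hlam (x k) (x (k + 1)) (hiter k) z
  have hdec : ∀ k : ℕ, φ (k + 1) ≤ φ k := by
    intro k
    have := hkey k (x k)
    simp only [sub_self, norm_zero] at this
    have h' : φ (k + 1) + c * ‖x (k + 1) - x k‖ ^ 2 ≤ φ k + c * 0 ^ 2 := this
    nlinarith [sq_nonneg (‖x (k + 1) - x k‖), h']
  have hmono : ∀ i j : ℕ, i ≤ j → φ j ≤ φ i := by
    intro i j hij
    induction j with
    | zero => simp_all
    | succ n ih =>
      rcases Nat.lt_or_ge i (n + 1) with h | h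
      · exact le_trans (hdec n) (ih (Nat.lt_succ_iff.1 h))
      · have : i = n + 1 := le_antisymm hij h
        subst this; rfl
  have hsum : ∀ k : ℕ, (k : ℝ) * (φ k - Fs)
      ≤ c * ‖x 0 - xstar‖ ^ 2 - c * ‖x k - xstar‖ ^ 2 := by
    intro k
    induction k with
    | zero => simp
    | succ n ih =>
      have hstep := hkey n xstar
      have hd : φ (n + 1) ≤ φ n := hdec n
      have hn : (0:ℝ) ≤ n := Nat.cast_nonneg n
      push_cast
      nlinarith [hstep, ih, hd, hn]
  intro k hk
  have hkpos : (0:ℝ) < k := by exact_mod_cast hk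
  have hS := hsum k
  have hnn : (0:ℝ) ≤ c * ‖x k - xstar‖ ^ 2 := by positivity
  have h1 : (k : ℝ) * (φ k - Fs) ≤ c * ‖x 0 - xstar‖ ^ 2 := by linarith
  show φ k - Fs ≤ ‖x 0 - xstar‖ ^ 2 / (2 * lam * (k:ℝ))
  rw [le_div_iff₀ (by positivity : (0:ℝ) < 2 * lam * k)]
  have h2 := mul_le_mul_of_nonneg_left h1 (by positivity : (0:ℝ) ≤ 2 * lam)
  have h3 : (2 * lam) * (c * ‖x 0 - xstar‖ ^ 2) = ‖x 0 - xstar‖ ^ 2 := by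
    rw [hc]; field_simp
  nlinarith [h2, h3]
end

section
/- Let E be a real Hilbert space, f : E → ℝ convex and differentiable, g : E → ℝ convex and lower semicontinuous, and λ > 0. A point x* ∈ E is a minimizer of f + g if and only if x* is a fixed point of the proximal gradient map, i.e., x* minimizes z ↦ g(z) + (1/(2λ))‖z − (x* − λ∇f(x*))‖². -/
open scoped RealInnerProductSpace
open Filter Topology

lemma my_slope_tendsto {E : Type*} [NormedAddCommGroup E] [InnerProductSpace ℝ E] [CompleteSpace E]
    {f : E → ℝ} {y x : E} (h : HasGradientAt f y x) (d : E) :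
    Tendsto (fun t : ℝ => (f (x + t • d) - f x) / t) (𝓝[>] (0:ℝ)) (𝓝 ⟪y, d⟫) := by
  have hc : HasDerivAt (fun s : ℝ => x + s • d) d 0 := by
    simpa using ((hasDerivAt_id (0:ℝ)).smul_const d).const_add x
  have h1 : HasDerivAt (fun t : ℝ => f (x + t • d)) ⟪y, d⟫ 0 := by
    have hF : HasFDerivAt f ((InnerProductSpace.toDual ℝ E) y) (x + (0:ℝ) • d) := by
      simpa using h.hasFDerivAt
    have h2 := hF.comp_hasDerivAt 0 hc
    simp at h2
    exact h2
  have h3 := hasDerivAt_iff_tendsto_slope.mp h1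
  have h4 : Tendsto (slope (fun t : ℝ => f (x + t • d)) 0) (𝓝[>] (0:ℝ)) (𝓝 ⟪y, d⟫) :=
    h3.mono_left (nhdsWithin_mono _ (fun t ht => ne_of_gt ht))
  refine h4.congr (fun t => ?_)
  simp [slope_def_field, div_eq_inv_mul]

/-- A point minimizes `f + g` iff it is a fixed point of the proximal gradient map
`x ↦ prox_{λg}(x - λ∇f(x))`. -/
theorem minimizer_iff_fixedPoint_prox_grad
    {E : Type*} [NormedAddCommGroup E] [InnerProductSpace ℝ E] [CompleteSpace E]
    (f g : E → ℝ) (f' : E → E) (lam : ℝ) (hlam : 0 < lam)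
    (hf : ConvexOn ℝ Set.univ f)
    (hdiff : ∀ x : E, HasGradientAt f (f' x) x)
    (hg : ConvexOn ℝ Set.univ g) (hglsc : LowerSemicontinuous g)
    (xstar : E) :
    (∀ z : E, f xstar + g xstar ≤ f z + g z) ↔
      (∀ z : E,
        g xstar + (1 / (2 * lam)) * ‖xstar - (xstar - lam • f' xstar)‖ ^ 2
          ≤ g z + (1 / (2 * lam)) * ‖z - (xstar - lam • f' xstar)‖ ^ 2) := by
  have hlam' : (0:ℝ) < 2 * lam := by linarith
  have heq : ∀ (z : E) (t : ℝ), xstar + t • (z - xstar) = (1 - t) • xstar + t • z := by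
    intro z t; module
  -- combination convexity bound helper
  have hgcvx : ∀ (z : E) (t : ℝ), t ∈ Set.Ioc (0:ℝ) 1 →
      g (xstar + t • (z - xstar)) ≤ (1 - t) * g xstar + t * g z := by
    intro z t ht
    have := hg.2 (Set.mem_univ xstar) (Set.mem_univ z)
      (by linarith [ht.2] : (0:ℝ) ≤ 1 - t) ht.1.le (by ring)
    simpa [heq z t, smul_eq_mul] using this
  have hfcvx : ∀ (z : E) (t : ℝ), t ∈ Set.Ioc (0:ℝ) 1 →
      f (xstar + t • (z - xstar)) ≤ (1 - t) * f xstar + t * f z := by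
    intro z t ht
    have := hf.2 (Set.mem_univ xstar) (Set.mem_univ z)
      (by linarith [ht.2] : (0:ℝ) ≤ 1 - t) ht.1.le (by ring)
    simpa [heq z t, smul_eq_mul] using this
  -- gradient inequality for convex f
  have grad_ineq : ∀ z : E, ⟪f' xstar, z - xstar⟫ ≤ f z - f xstar := by
    intro z
    refine le_of_tendsto (my_slope_tendsto (hdiff xstar) (z - xstar)) ?_
    filter_upwards [Ioc_mem_nhdsGT one_pos] with t ht
    rw [div_le_iff₀ ht.1]
    have := hfcvx z t ht
    nlinarith
  -- norm expansion
  have hA : ∀ w : E, ‖w - (xstar - lam • f' xstar)‖ ^ 2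
      = ‖w - xstar‖ ^ 2 + 2 * lam * ⟪w - xstar, f' xstar⟫ + lam ^ 2 * ‖f' xstar‖ ^ 2 := by
    intro w
    have h0 : w - (xstar - lam • f' xstar) = (w - xstar) + lam • f' xstar := by module
    have h1 : ‖lam • f' xstar‖ ^ 2 = lam ^ 2 * ‖f' xstar‖ ^ 2 := by
      rw [norm_smul, mul_pow, Real.norm_eq_abs, sq_abs]
    rw [h0, norm_add_sq_real, real_inner_smul_right, h1]; ring
  have hAx : ‖xstar - (xstar - lam • f' xstar)‖ ^ 2 = lam ^ 2 * ‖f' xstar‖ ^ 2 := by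
    rw [hA xstar]; simp
  -- the key intermediate property
  constructor
  · -- minimizer → prox fixed point
    intro hmin z
    have key : g xstar ≤ g z + ⟪f' xstar, z - xstar⟫ := by
      have h2 : g xstar - g z ≤ ⟪f' xstar, z - xstar⟫ := by
        refine ge_of_tendsto (my_slope_tendsto (hdiff xstar) (z - xstar)) ?_
        filter_upwards [Ioc_mem_nhdsGT one_pos] with t ht
        rw [le_div_iff₀ ht.1]
        have h3 := hgcvx z t ht
        have h4 := hmin (xstar + t • (z - xstar))
        nlinarith
      linarith
    rw [hAx, hA z]
    have hpos : 0 ≤ (1 / (2 * lam)) * ‖z - xstar‖ ^ 2 := by positivity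
    have hsym : ⟪z - xstar, f' xstar⟫ = ⟪f' xstar, z - xstar⟫ := real_inner_comm _ _
    have hcl : (1 / (2 * lam)) * (2 * lam * ⟪z - xstar, f' xstar⟫)
        = ⟪z - xstar, f' xstar⟫ := by field_simp
    nlinarith
  · -- prox fixed point → minimizer
    intro hp z
    have key : g xstar ≤ g z + ⟪f' xstar, z - xstar⟫ := by
      have htend : Filter.Tendsto
          (fun t : ℝ => g z + ⟪f' xstar, z - xstar⟫ + t * (‖z - xstar‖ ^ 2 / (2 * lam)))
          (𝓝[>] (0:ℝ)) (𝓝 (g z + ⟪f' xstar, z - xstar⟫)) := by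
        have hc : Continuous
            (fun t : ℝ => g z + ⟪f' xstar, z - xstar⟫ + t * (‖z - xstar‖ ^ 2 / (2 * lam))) := by
          continuity
        simpa using (hc.tendsto 0).mono_left nhdsWithin_le_nhds
      refine ge_of_tendsto htend ?_
      filter_upwards [Ioc_mem_nhdsGT one_pos] with t ht
      have hp' := hp (xstar + t • (z - xstar))
      rw [hAx, hA (xstar + t • (z - xstar))] at hp'
      have hw : xstar + t • (z - xstar) - xstar = t • (z - xstar) := by module
      rw [hw] at hp'
      have hn : ‖t • (z - xstar)‖ ^ 2 = t ^ 2 * ‖z - xstar‖ ^ 2 := by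
        rw [norm_smul, mul_pow, Real.norm_eq_abs, sq_abs]
      rw [hn, real_inner_smul_left] at hp'
      have h3 := hgcvx z t ht
      have hsym : ⟪z - xstar, f' xstar⟫ = ⟪f' xstar, z - xstar⟫ := real_inner_comm _ _
      have e3 : (1 / (2 * lam)) * (t ^ 2 * ‖z - xstar‖ ^ 2
            + 2 * lam * (t * ⟪z - xstar, f' xstar⟫) + lam ^ 2 * ‖f' xstar‖ ^ 2)
          = t * (t * (‖z - xstar‖ ^ 2 / (2 * lam))) + t * ⟪z - xstar, f' xstar⟫
            + (1 / (2 * lam)) * (lam ^ 2 * ‖f' xstar‖ ^ 2) := by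
        field_simp
      rw [e3, hsym] at hp'
      have h5 : t * g xstar
          ≤ t * (g z + ⟪f' xstar, z - xstar⟫ + t * (‖z - xstar‖ ^ 2 / (2 * lam))) := by
        nlinarith [hp', h3]
      exact le_of_mul_le_mul_left h5 ht.1
    have := grad_ineq z
    linarith
end

section
/- (Objective convergence of PnP iterations with gradient-step denoisers) Let E be a real Hilbert space, f : E → ℝ convex and lower semicontinuous, g : E → ℝ differentiable with L-Lipschitz gradient, λ > 0, and τ ∈ (0, 1/(λL)). Assume F := f + λg is bounded below. Define the iterates x_{k+1} = prox_{τf}(x_k − τλ∇g(x_k)), i.e., x_{k+1} minimizes z ↦ f(z) + (1/(2τ))‖z − (x_k − τλ∇g(x_k))‖². Then: (i) the sequence F(x_k) is nonincreasing and convergent; (ii) ‖x_{k+1} − x_k‖ → 0 as k → ∞; (iii) every cluster point x̄ of (x_k) is a stationary point of F, in the sense that −λ∇g(x̄) is a subgradient of f at x̄. -/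
set_option maxHeartbeats 1000000
open Filter Topology
open scoped RealInnerProductSpace

lemma pnp_aux_descent {E : Type*} [NormedAddCommGroup E] [InnerProductSpace ℝ E] [CompleteSpace E]
    (g : E → ℝ) (g' : E → E) (L : ℝ)
    (hdiff : ∀ x, HasGradientAt g (g' x) x)
    (hlip : ∀ x y, ‖g' x - g' y‖ ≤ L * ‖x - y‖) (x y : E) :
    g y ≤ g x + ⟪g' x, y - x⟫ + L / 2 * ‖y - x‖ ^ 2 := by
  set d := y - x with hd
  set ψ : ℝ → ℝ := fun t => g (x + t • d) - t * ⟪g' x, d⟫ - L * t ^ 2 / 2 * ‖d‖ ^ 2 with hψdef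
  have hcurve : ∀ t : ℝ, HasDerivAt (fun t : ℝ => x + t • d) d t := fun t => by
    simpa using ((hasDerivAt_id t).smul_const d).const_add x
  have hψ' : ∀ t : ℝ, HasDerivAt ψ (⟪g' (x + t • d), d⟫ - ⟪g' x, d⟫ - L * t * ‖d‖ ^ 2) t := by
    intro t
    have h1 : HasDerivAt (fun t : ℝ => g (x + t • d)) ⟪g' (x + t • d), d⟫ t := by
      have := ((hdiff (x + t • d)).hasFDerivAt).comp_hasDerivAt t (hcurve t)
      simpa [InnerProductSpace.toDual_apply_apply, Function.comp_def] using this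
    have h2 : HasDerivAt (fun t : ℝ => t * ⟪g' x, d⟫) ⟪g' x, d⟫ t := by
      simpa using (hasDerivAt_id t).mul_const (⟪g' x, d⟫ : ℝ)
    have h3 : HasDerivAt (fun t : ℝ => L * t ^ 2 / 2 * ‖d‖ ^ 2) (L * t * ‖d‖ ^ 2) t := by
      have := (((hasDerivAt_pow 2 t).const_mul L).div_const 2).mul_const (‖d‖ ^ 2)
      refine this.congr_deriv ?_
      push_cast
      ring
    exact (h1.sub h2).sub h3
  have key : ψ 1 ≤ ψ 0 := by
    have hanti : AntitoneOn ψ (Set.Icc 0 1) := by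
      apply antitoneOn_of_deriv_nonpos (convex_Icc (0:ℝ) 1)
      · exact (Differentiable.continuous fun t => (hψ' t).differentiableAt).continuousOn
      · exact fun t _ => (hψ' t).differentiableAt.differentiableWithinAt
      · intro t ht
        rw [interior_Icc] at ht
        rw [(hψ' t).deriv]
        rw [show (⟪g' (x + t • d), d⟫ : ℝ) - ⟪g' x, d⟫ = ⟪g' (x + t • d) - g' x, d⟫ from (inner_sub_left _ _ _).symm]
        have h5 : (⟪g' (x + t • d) - g' x, d⟫ : ℝ) ≤ ‖g' (x + t • d) - g' x‖ * ‖d‖ :=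
          real_inner_le_norm _ _
        have h6 : ‖g' (x + t • d) - g' x‖ ≤ L * ‖t • d‖ := by
          simpa using hlip (x + t • d) x
        have h7 : ‖t • d‖ = t * ‖d‖ := by
          rw [norm_smul, Real.norm_eq_abs, abs_of_pos ht.1]
        rw [h7] at h6
        have h8 := mul_le_mul_of_nonneg_right h6 (norm_nonneg d)
        nlinarith [h5, h8]
    exact hanti (by norm_num) (by norm_num) (by norm_num)
  have h0 : ψ 0 = g x := by simp [hψdef]
  have h1 : ψ 1 = g y - ⟪g' x, d⟫ - L / 2 * ‖d‖ ^ 2 := by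
    have : x + (1:ℝ) • d = y := by simp [hd]
    simp only [hψdef, this]
    ring
  rw [h0, h1] at key
  linarith

/-- Objective convergence of PnP iterations with a gradient-step denoiser
`D = id - ∇g` (Hurault et al.): the iterates of
`x_{k+1} = prox_{τf}(x_k - τλ∇g(x_k))` have nonincreasing convergent objective values
`F(x_k)`, vanishing residuals, and all cluster points are stationary points of
`F = f + λ g`. -/
theorem pnp_gradient_step_objective_convergence
    {E : Type*} [NormedAddCommGroup E] [InnerProductSpace ℝ E] [CompleteSpace E]
    (f g : E → ℝ) (g' : E → E) (L lam τ : ℝ) (hL : 0 < L) (hlam : 0 < lam)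
    (hf : ConvexOn ℝ Set.univ f) (hflsc : LowerSemicontinuous f)
    (hdiff : ∀ x : E, HasGradientAt g (g' x) x)
    (hlip : ∀ x y : E, ‖g' x - g' y‖ ≤ L * ‖x - y‖)
    (hτ : τ ∈ Set.Ioo 0 (1 / (lam * L)))
    (hbdd : ∃ B : ℝ, ∀ z : E, B ≤ f z + lam * g z)
    (x : ℕ → E)
    (hiter : ∀ (k : ℕ) (z : E),
      f (x (k + 1)) + (1 / (2 * τ)) * ‖x (k + 1) - (x k - (τ * lam) • g' (x k))‖ ^ 2
        ≤ f z + (1 / (2 * τ)) * ‖z - (x k - (τ * lam) • g' (x k))‖ ^ 2) :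
    (Antitone (fun k : ℕ => f (x k) + lam * g (x k)) ∧
      ∃ ℓ : ℝ, Tendsto (fun k : ℕ => f (x k) + lam * g (x k)) atTop (𝓝 ℓ)) ∧
    Tendsto (fun k : ℕ => ‖x (k + 1) - x k‖) atTop (𝓝 0) ∧
    ∀ xbar : E, MapClusterPt xbar atTop x →
      ∀ z : E, f xbar + ⟪-(lam • g' xbar), z - xbar⟫ ≤ f z := by
  obtain ⟨hτ0, hτ1⟩ := hτ
  have hlamL : 0 < lam * L := mul_pos hlam hL
  have hτlamL : τ * (lam * L) < 1 := (lt_div_iff₀ hlamL).mp hτ1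
  set F : ℕ → ℝ := fun k => f (x k) + lam * g (x k) with hF
  set c : ℝ := 1 / (2 * τ) - lam * L / 2 with hc
  have hcpos : 0 < c := by
    rw [hc, sub_pos, div_lt_div_iff₀ (by norm_num) (by positivity)]
    nlinarith
  -- sufficient decrease
  have hdec : ∀ k : ℕ, F (k + 1) + c * ‖x (k + 1) - x k‖ ^ 2 ≤ F k := by
    intro k
    set d := x (k + 1) - x k with hd
    set u := g' (x k) with hu
    have hiterk := hiter k (x k)
    have e1 : x (k + 1) - (x k - (τ * lam) • u) = d + (τ * lam) • u := by
      rw [hd]; abel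
    have e2 : x k - (x k - (τ * lam) • u) = (τ * lam) • u := by abel
    rw [e1, e2] at hiterk
    have e3 : ‖d + (τ * lam) • u‖ ^ 2 = ‖d‖ ^ 2 + 2 * (τ * lam) * ⟪d, u⟫ + ‖(τ * lam) • u‖ ^ 2 := by
      rw [norm_add_sq_real, real_inner_smul_right]
      ring
    rw [e3] at hiterk
    -- f (x (k+1)) + 1/(2τ)‖d‖² + lam⟪d,u⟫ ≤ f (x k)
    have hfk : f (x (k + 1)) + 1 / (2 * τ) * ‖d‖ ^ 2 + lam * ⟪d, u⟫ ≤ f (x k) := by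
      have hτne : (2 * τ) ≠ 0 := by positivity
      have : 1 / (2 * τ) * (2 * (τ * lam) * ⟪d, u⟫) = lam * ⟪d, u⟫ := by
        field_simp
      nlinarith [hiterk]
    have hg : g (x (k + 1)) ≤ g (x k) + ⟪u, d⟫ + L / 2 * ‖d‖ ^ 2 := by
      have := pnp_aux_descent g g' L hdiff hlip (x k) (x (k + 1))
      rwa [← hd, ← hu] at this
    have hcomm : (⟪d, u⟫ : ℝ) = ⟪u, d⟫ := real_inner_comm _ _
    simp only [hF, hc, ← hd]
    nlinarith [mul_le_mul_of_nonneg_left hg (le_of_lt hlam)]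
  have hF_anti : Antitone F := antitone_nat_of_succ_le fun k => by
    nlinarith [hdec k, sq_nonneg ‖x (k + 1) - x k‖, hcpos]
  obtain ⟨B, hB⟩ := hbdd
  have hbdd' : BddBelow (Set.range F) := ⟨B, by rintro _ ⟨k, rfl⟩; exact hB (x k)⟩
  have hFconv : Tendsto F atTop (𝓝 (⨅ k, F k)) := tendsto_atTop_ciInf hF_anti hbdd'
  -- residuals
  have hFdiff : Tendsto (fun k => F k - F (k + 1)) atTop (𝓝 0) := by
    have h2 : Tendsto (fun k => F (k + 1)) atTop (𝓝 (⨅ k, F k)) :=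
      hFconv.comp (tendsto_add_atTop_nat 1)
    simpa using hFconv.sub h2
  have hsq : Tendsto (fun k => ‖x (k + 1) - x k‖ ^ 2) atTop (𝓝 0) := by
    have hbound : ∀ k, ‖x (k + 1) - x k‖ ^ 2 ≤ c⁻¹ * (F k - F (k + 1)) := by
      intro k
      have h1 : c * ‖x (k + 1) - x k‖ ^ 2 ≤ F k - F (k + 1) := by linarith [hdec k]
      have h2 := mul_le_mul_of_nonneg_left h1 (le_of_lt (inv_pos.mpr hcpos))
      rwa [← mul_assoc, inv_mul_cancel₀ (ne_of_gt hcpos), one_mul] at h2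
    have htend : Tendsto (fun k => c⁻¹ * (F k - F (k + 1))) atTop (𝓝 0) := by
      simpa using hFdiff.const_mul c⁻¹
    exact squeeze_zero (fun k => sq_nonneg _) hbound htend
  have hres : Tendsto (fun k : ℕ => ‖x (k + 1) - x k‖) atTop (𝓝 0) := by
    have := hsq.sqrt
    simp only [Real.sqrt_zero] at this
    refine this.congr fun k => ?_
    rw [Real.sqrt_sq (norm_nonneg _)]
  refine ⟨⟨hF_anti, ⟨_, hFconv⟩⟩, hres, ?_⟩
  -- part (iii)
  intro xbar hcl z0
  obtain ⟨ψ, hψmono, hψtend⟩ := TopologicalSpace.FirstCountableTopology.tendsto_subseq hcl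
  have hψto : Tendsto ψ atTop atTop := hψmono.tendsto_atTop
  have hresψ : Tendsto (fun j => x (ψ j + 1) - x (ψ j)) atTop (𝓝 0) := by
    rw [tendsto_zero_iff_norm_tendsto_zero]
    exact hres.comp hψto
  have hnext : Tendsto (fun j => x (ψ j + 1)) atTop (𝓝 xbar) := by
    have h := hψtend.add hresψ
    simp only [Function.comp] at h ⊢
    have : ∀ j, x (ψ j) + (x (ψ j + 1) - x (ψ j)) = x (ψ j + 1) := fun j => by abel
    simpa [this] using h
  have hψtend' : Tendsto (fun j => x (ψ j)) atTop (𝓝 xbar) := hψtend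
  have hg'cont : Tendsto (fun j => g' (x (ψ j))) atTop (𝓝 (g' xbar)) := by
    have h1 : Tendsto (fun j => ‖g' (x (ψ j)) - g' xbar‖) atTop (𝓝 0) := by
      apply squeeze_zero (fun j => norm_nonneg _) (fun j => hlip _ _)
      have h2 : Tendsto (fun j => x (ψ j) - xbar) atTop (𝓝 0) := by
        simpa using hψtend'.sub (tendsto_const_nhds : Tendsto (fun _ : ℕ => xbar) atTop _)
      simpa using h2.norm.const_mul L
    have h3 := tendsto_zero_iff_norm_tendsto_zero.mpr h1
    have h4 := h3.add (tendsto_const_nhds : Tendsto (fun _ : ℕ => g' xbar) atTop _)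
    simpa using h4
  set w : E := (τ * lam) • g' xbar with hw
  set vb : E := xbar - w with hvb
  have hv : Tendsto (fun j => x (ψ j) - (τ * lam) • g' (x (ψ j))) atTop (𝓝 vb) :=
    hψtend'.sub (hg'cont.const_smul _)
  have hbase : ∀ z : E,
      f xbar ≤ f z + 1 / (2 * τ) * ‖z - xbar‖ ^ 2 + lam * ⟪g' xbar, z - xbar⟫ := by
    intro z
    set a : ℕ → ℝ := fun j =>
      f z + 1 / (2 * τ) * ‖z - (x (ψ j) - (τ * lam) • g' (x (ψ j)))‖ ^ 2
        - 1 / (2 * τ) * ‖x (ψ j + 1) - (x (ψ j) - (τ * lam) • g' (x (ψ j)))‖ ^ 2 with ha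
    have hfa : ∀ j, f (x (ψ j + 1)) ≤ a j := fun j => by
      have := hiter (ψ j) z
      simp only [ha]
      linarith
    have haC : Tendsto a atTop
        (𝓝 (f z + 1 / (2 * τ) * ‖z - vb‖ ^ 2 - 1 / (2 * τ) * ‖w‖ ^ 2)) := by
      have h1 : Tendsto (fun j => z - (x (ψ j) - (τ * lam) • g' (x (ψ j)))) atTop (𝓝 (z - vb)) :=
        tendsto_const_nhds.sub hv
      have h2 : Tendsto (fun j => x (ψ j + 1) - (x (ψ j) - (τ * lam) • g' (x (ψ j)))) atTop
          (𝓝 (xbar - vb)) := hnext.sub hv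
      have hxw : xbar - vb = w := by rw [hvb]; abel
      rw [hxw] at h2
      have t1 := (h1.norm.pow 2).const_mul (1 / (2 * τ))
      have t2 := (h2.norm.pow 2).const_mul (1 / (2 * τ))
      exact ((tendsto_const_nhds : Tendsto (fun _ : ℕ => f z) atTop _).add t1).sub t2
    have hC : f xbar ≤ f z + 1 / (2 * τ) * ‖z - vb‖ ^ 2 - 1 / (2 * τ) * ‖w‖ ^ 2 := by
      by_contra hcon
      push_neg at hcon
      obtain ⟨y, hy1, hy2⟩ := exists_between hcon
      have hev1 : ∀ᶠ j in atTop, y < f (x (ψ j + 1)) := hnext.eventually (hflsc xbar y hy2)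
      have hev2 : ∀ᶠ j in atTop, a j < y := haC.eventually (gt_mem_nhds hy1)
      obtain ⟨j, hj1, hj2⟩ := (hev1.and hev2).exists
      linarith [hfa j]
    have h9 : f z + 1 / (2 * τ) * ‖z - vb‖ ^ 2 - 1 / (2 * τ) * ‖w‖ ^ 2
        = f z + 1 / (2 * τ) * ‖z - xbar‖ ^ 2 + lam * ⟪g' xbar, z - xbar⟫ := by
      have e0 : z - vb = (z - xbar) + w := by rw [hvb]; abel
      have hexp : ‖z - vb‖ ^ 2 = ‖z - xbar‖ ^ 2 + 2 * ⟪z - xbar, w⟫ + ‖w‖ ^ 2 := by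
        rw [e0, norm_add_sq_real]
      have hinner : (⟪z - xbar, w⟫ : ℝ) = (τ * lam) * ⟪g' xbar, z - xbar⟫ := by
        rw [hw, real_inner_smul_right, real_inner_comm]
      rw [hexp, hinner]
      field_simp
      ring
    rw [h9] at hC
    exact hC
  have hkey : ∀ t : ℝ, 0 < t → t ≤ 1 →
      f xbar ≤ f z0 + t * (1 / (2 * τ) * ‖z0 - xbar‖ ^ 2) + lam * ⟪g' xbar, z0 - xbar⟫ := by
    intro t ht0 ht1
    have hz_t := hbase (xbar + t • (z0 - xbar))
    have e1 : xbar + t • (z0 - xbar) - xbar = t • (z0 - xbar) := add_sub_cancel_left _ _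
    rw [e1] at hz_t
    have e2 : ‖t • (z0 - xbar)‖ ^ 2 = t ^ 2 * ‖z0 - xbar‖ ^ 2 := by
      rw [norm_smul, Real.norm_eq_abs, mul_pow, sq_abs]
    have e3 : (⟪g' xbar, t • (z0 - xbar)⟫ : ℝ) = t * ⟪g' xbar, z0 - xbar⟫ :=
      real_inner_smul_right _ _ _
    rw [e2, e3] at hz_t
    have hconv : f (xbar + t • (z0 - xbar)) ≤ (1 - t) * f xbar + t * f z0 := by
      have h := hf.2 (Set.mem_univ xbar) (Set.mem_univ z0)
        (by linarith : (0:ℝ) ≤ 1 - t) (le_of_lt ht0) (by ring)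
      have e4 : (1 - t) • xbar + t • z0 = xbar + t • (z0 - xbar) := by
        rw [sub_smul, smul_sub, one_smul]
        abel
      rw [e4] at h
      simpa using h
    nlinarith [hz_t, hconv, ht0]
  have hQ : 0 ≤ 1 / (2 * τ) * ‖z0 - xbar‖ ^ 2 := by positivity
  have hfinal : f xbar ≤ f z0 + lam * ⟪g' xbar, z0 - xbar⟫ := by
    have hstep : ∀ ε : ℝ, 0 < ε → f xbar ≤ f z0 + lam * ⟪g' xbar, z0 - xbar⟫ + ε := by
      intro ε hε
      set Q : ℝ := 1 / (2 * τ) * ‖z0 - xbar‖ ^ 2 with hQdef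
      set t : ℝ := min 1 (ε / (Q + 1)) with htdef
      have ht0 : 0 < t := lt_min one_pos (div_pos hε (by linarith))
      have ht1 : t ≤ 1 := min_le_left _ _
      have hk := hkey t ht0 ht1
      have htQ : t * Q ≤ ε := by
        have h1 : t ≤ ε / (Q + 1) := min_le_right _ _
        have h2 := mul_le_mul_of_nonneg_right h1 hQ
        have h3 : ε / (Q + 1) * Q ≤ ε := by
          rw [div_mul_eq_mul_div, div_le_iff₀ (by linarith : (0:ℝ) < Q + 1)]
          nlinarith
        linarith
      linarith
    exact le_of_forall_pos_le_add hstep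
  have hrw : (⟪-(lam • g' xbar), z0 - xbar⟫ : ℝ) = -(lam * ⟪g' xbar, z0 - xbar⟫) := by
    rw [inner_neg_left, real_inner_smul_left]
  rw [hrw]
  linarith
end

section
/- (Fixed-point convergence of PnP-DRSdiff, Ryu et al.) Let E be a real Hilbert space, τ > 0, and f : E → ℝ be μ-strongly convex (μ > 0) and lower semicontinuous; let P : E → E denote the proximal operator of τf, i.e., P(v) is the unique minimizer of z ↦ f(z) + (1/(2τ))‖z − v‖². Let D : E → E be a map whose residual D − id is ε-Lipschitz for some ε ∈ (0,1): ‖(D − id)(u) − (D − id)(v)‖ ≤ ε‖u − v‖ for all u, v. Assume ε/((1 + ε − 2ε²)μ) < τ. Define T := (1/2)·id + (1/2)·(2D − id)∘(2P − id). Then T is a contraction, i.e., there exists ρ < 1 such that T is ρ-Lipschitz; consequently T has a unique fixed point x*, and for any initialization x₀ the iterates x_{k+1} = T(x_k) converge to x*. -/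
open Filter Topology
open scoped RealInnerProductSpace

private lemma min_strong' {E : Type*} [NormedAddCommGroup E] [InnerProductSpace ℝ E]
    (h : E → ℝ) (hc : ConvexOn ℝ Set.univ h) (σ : ℝ) (hσ : 0 ≤ σ) (m : E)
    (hmin : ∀ w : E, h m + σ/2 * ‖m‖^2 ≤ h w + σ/2 * ‖w‖^2) (z : E) :
    h m + σ/2 * ‖m‖^2 + σ/2 * ‖z - m‖^2 ≤ h z + σ/2 * ‖z‖^2 := by
  have key : h m - σ * ⟪m, z - m⟫ ≤ h z := by
    refine le_of_forall_pos_le_add fun η hη => ?_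
    set C : ℝ := σ * ‖z - m‖^2 / 2 with hC
    have hC0 : 0 ≤ C := by positivity
    set t : ℝ := min 1 (η / (C + 1)) with ht
    have ht0 : 0 < t := lt_min one_pos (div_pos hη (by linarith))
    have ht1 : t ≤ 1 := min_le_left _ _
    have hconv := hc.2 (Set.mem_univ m) (Set.mem_univ z)
      (by linarith : (0:ℝ) ≤ 1 - t) ht0.le (by ring)
    simp only [smul_eq_mul] at hconv
    have hw := hmin ((1-t) • m + t • z)
    have hid : (1-t) • m + t • z = m + t • (z - m) := by module
    have hnorm : ‖(1-t) • m + t • z‖^2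
        = ‖m‖^2 + 2*t*⟪m, z - m⟫ + t^2 * ‖z - m‖^2 := by
      rw [hid, norm_add_sq_real, real_inner_smul_right, norm_smul, Real.norm_eq_abs,
        mul_pow, sq_abs]
      ring
    rw [hnorm] at hw
    have step : t * (h m - h z - σ * ⟪m, z - m⟫) ≤ C * t * t := by nlinarith [hconv, hw]
    have step2 : h m - h z - σ * ⟪m, z - m⟫ ≤ C * t := by
      have := (mul_le_mul_iff_right₀ ht0).mp
        (by linarith [step] : t * (h m - h z - σ * ⟪m, z - m⟫) ≤ t * (C * t))
      linarith
    have hCt : C * t ≤ η := by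
      have h1 : t ≤ η / (C + 1) := min_le_right _ _
      have h2 : C * t ≤ C * (η / (C + 1)) := mul_le_mul_of_nonneg_left h1 hC0
      have h3 : C * (η / (C + 1)) ≤ η := by
        have e : (C+1) * (η/(C+1)) = η := mul_div_cancel₀ _ (by linarith)
        nlinarith [div_nonneg hη.le (by linarith : (0:ℝ) ≤ C+1)]
      linarith
    linarith
  have e1 : ⟪m, z - m⟫ = ⟪m, z⟫ - ‖m‖^2 := by
    rw [inner_sub_right, real_inner_self_eq_norm_sq]
  have e2 : ‖z - m‖^2 = ‖z‖^2 - 2*⟪m,z⟫ + ‖m‖^2 := by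
    rw [norm_sub_sq_real, real_inner_comm]
  rw [e1] at key
  rw [e2]
  nlinarith [key]

private lemma prox_strong_mono {E : Type*} [NormedAddCommGroup E] [InnerProductSpace ℝ E]
    (f : E → ℝ) (τ μ : ℝ) (hτ : 0 < τ) (hμ : 0 < μ)
    (hstrong : ConvexOn ℝ Set.univ (fun x => f x - (μ / 2) * ‖x‖ ^ 2))
    (P : E → E)
    (hP : ∀ v z : E,
      f (P v) + (1 / (2 * τ)) * ‖P v - v‖ ^ 2 ≤ f z + (1 / (2 * τ)) * ‖z - v‖ ^ 2)
    (x y : E) :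
    (1 + τ*μ) * ‖P x - P y‖^2 ≤ ⟪x - y, P x - P y⟫ := by
  have hP' : ∀ v z : E, 2*τ*(f (P v)) + ‖P v - v‖^2 ≤ 2*τ*(f z) + ‖z - v‖^2 := by
    intro v z
    have h := hP v z
    have hτ' : (2*τ) > 0 := by linarith
    have := mul_le_mul_of_nonneg_left h hτ'.le
    rw [mul_add, mul_add, ← mul_assoc, ← mul_assoc,
      mul_one_div_cancel (by positivity : (2*τ) ≠ 0)] at this
    linarith
  have hgrow : ∀ v z : E, 2*τ*(f (P v)) + ‖P v - v‖^2 + (1+τ*μ)*‖z - P v‖^2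
      ≤ 2*τ*(f z) + ‖z - v‖^2 := by
    intro v z
    set h : E → ℝ := fun w => 2*τ*(f w) + ‖w - v‖^2 - (1+τ*μ)*‖w‖^2 with hh
    have hconv : ConvexOn ℝ Set.univ h := by
      have haff : ConvexOn ℝ Set.univ (fun w : E => ‖v‖^2 - 2*⟪w,v⟫) := by
        refine ⟨convex_univ, fun p _ q _ a b ha hb hab => ?_⟩
        simp only [smul_eq_mul, inner_add_left, real_inner_smul_left]
        nlinarith [hab]
      have hsum := (hstrong.smul (by positivity : (0:ℝ) ≤ 2*τ)).add haff
      suffices hfun : h = (fun x => (2 * τ) • (f x - μ / 2 * ‖x‖ ^ 2)) + fun w => ‖v‖ ^ 2 - 2 * ⟪w, v⟫ by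
        rw [hfun]; exact hsum
      funext w
      simp only [hh, smul_eq_mul, Pi.add_apply]
      rw [norm_sub_sq_real]
      ring
    have hmin : ∀ w : E, h (P v) + (2*(1+τ*μ))/2 * ‖P v‖^2 ≤ h w + (2*(1+τ*μ))/2 * ‖w‖^2 := by
      intro w
      have := hP' v w
      simp only [hh]
      ring_nf
      ring_nf at this
      linarith
    have := min_strong' h hconv (2*(1+τ*μ)) (by positivity) (P v) hmin z
    simp only [hh] at this
    ring_nf
    ring_nf at this
    linarith
  have h1 := hgrow x (P y)
  have h2 := hgrow y (P x)
  have e1 : ‖P y - x‖^2 = ‖P y‖^2 - 2*⟪P y, x⟫ + ‖x‖^2 := norm_sub_sq_real _ _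
  have e2 : ‖P x - y‖^2 = ‖P x‖^2 - 2*⟪P x, y⟫ + ‖y‖^2 := norm_sub_sq_real _ _
  have e3 : ‖P x - x‖^2 = ‖P x‖^2 - 2*⟪P x, x⟫ + ‖x‖^2 := norm_sub_sq_real _ _
  have e4 : ‖P y - y‖^2 = ‖P y‖^2 - 2*⟪P y, y⟫ + ‖y‖^2 := norm_sub_sq_real _ _
  have e5 : ‖P y - P x‖^2 = ‖P x - P y‖^2 := by rw [norm_sub_rev]
  have e6 : ⟪x - y, P x - P y⟫ = ⟪P x, x⟫ - ⟪P x, y⟫ - ⟪P y, x⟫ + ⟪P y, y⟫ := by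
    rw [inner_sub_left, inner_sub_right, inner_sub_right]
    rw [real_inner_comm x (P x), real_inner_comm x (P y), real_inner_comm y (P x),
      real_inner_comm y (P y)]
    ring
  rw [e5, e1] at h1
  rw [e2, e4] at h2
  rw [e6]
  rw [e3] at h1
  linarith [h1, h2]

private lemma bd_bound {s a b d : ℝ} (hs : 0 ≤ s) (ha : 0 ≤ a) (hb : 0 ≤ b) (hd : 0 ≤ d)
    (hb2 : b^2 ≤ d^2 - 4*s*a^2) : b*d ≤ d^2 - 2*s*a^2 := by
  nlinarith [hb2, sq_nonneg (b - d), mul_nonneg (mul_nonneg hs ha) ha]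

private lemma case2_pt {s ε a b d k : ℝ} (hs : 0 < s) (hε0 : 0 < ε)
    (hk : 8*ε*s*k = 1)
    (ha : 0 ≤ a) (hb : 0 ≤ b) (hd : 0 ≤ d)
    (hb2 : b^2 ≤ d^2 - 4*s*a^2) (had : (1+s)*a ≤ d) :
    a + ε*b ≤ (ε + k)*d := by
  have hbd : b*d ≤ d^2 - 2*s*a^2 := bd_bound hs.le ha hb hd hb2
  rcases hd.eq_or_lt with hd0 | hd0
  · have ha0 : a = 0 := le_antisymm (by nlinarith) ha
    have hb0 : b = 0 := le_antisymm (by nlinarith) hb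
    simp [ha0, hb0, ← hd0]
  · have hq : 0 ≤ 2*ε*s*a^2 + k*d^2 - a*d := by
      have e : 8*ε*s*(2*ε*s*a^2 + k*d^2 - a*d) = (4*ε*s*a - d)^2 := by
        linear_combination d^2 * hk
      nlinarith [sq_nonneg (4*ε*s*a - d), mul_pos (mul_pos (by norm_num : (0:ℝ) < 8) hε0) hs]
    have : (a + ε*b)*d ≤ ((ε + k)*d)*d := by
      nlinarith [mul_le_mul_of_nonneg_left hbd hε0.le]
    exact le_of_mul_le_mul_right this hd0

private lemma case1_pt {s ε a b d k : ℝ} (hs : 0 < s) (hε0 : 0 < ε)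
    (hk : k * (1+s)^2 = 1 + s - 2*ε*s) (hcase : 4*ε*s ≤ 1 + s)
    (ha : 0 ≤ a) (hb : 0 ≤ b) (hd : 0 ≤ d)
    (hb2 : b^2 ≤ d^2 - 4*s*a^2) (had : (1+s)*a ≤ d) :
    a + ε*b ≤ (ε + k)*d := by
  have hbd : b*d ≤ d^2 - 2*s*a^2 := bd_bound hs.le ha hb hd hb2
  rcases hd.eq_or_lt with hd0 | hd0
  · have ha0 : a = 0 := le_antisymm (by nlinarith) ha
    have hb0 : b = 0 := le_antisymm (by nlinarith) hb
    simp [ha0, hb0, ← hd0]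
  · have h1 : 0 ≤ (d - (1+s)*a) * ((1+s)*d - 2*ε*s*(d + (1+s)*a)) := by
      refine mul_nonneg (by linarith) ?_
      have h2 : 2*ε*s*((1+s)*a) ≤ 2*ε*s*d :=
        mul_le_mul_of_nonneg_left had (by positivity)
      nlinarith
    have h2 : (a*d - 2*ε*s*a^2) * (1+s)^2 ≤ (k*d^2) * (1+s)^2 := by
      nlinarith [h1, hk, sq_nonneg d]
    have h3 : a*d - 2*ε*s*a^2 ≤ k*d^2 :=
      le_of_mul_le_mul_right h2 (by positivity)
    have : (a + ε*b)*d ≤ ((ε + k)*d)*d := by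
      nlinarith [mul_le_mul_of_nonneg_left hbd hε0.le]
    exact le_of_mul_le_mul_right this hd0

private lemma case2_rho {s ε : ℝ} (hs0 : 0 < s) (hε0 : 0 < ε) (hε1 : ε < 1)
    (hsε : ε < s*(1+ε-2*ε^2)) (hcase : 1 + s < 4*ε*s) :
    1 < 8*ε*s*(1-ε) := by
  rcases le_or_gt ε (1/2) with h | h
  · nlinarith [hcase, mul_nonneg hs0.le (by nlinarith : (0:ℝ) ≤ 4*ε - 8*ε^2)]
  · nlinarith [mul_lt_mul_of_pos_left hsε (by positivity : (0:ℝ) < 8*ε),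
      mul_nonneg (by linarith : (0:ℝ) ≤ 4*ε+1) (by linarith : (0:ℝ) ≤ 2*ε-1),
      mul_pos hs0 hε0]

private lemma case1_F {s ε : ℝ} (hs0 : 0 < s) (hε0 : 0 < ε) (hε1 : ε < 1)
    (hsε : ε < s*(1+ε-2*ε^2)) :
    0 < (1-ε)*s^2 + s - ε := by
  set A : ℝ := s*(1+ε-2*ε^2) - ε with hA
  have hA0 : 0 < A := by linarith
  have e : (1+2*ε)*(1+ε-2*ε^2)*((1-ε)*s^2 + s - ε)
      = (1+ε-2*ε^2)*s*A + (1+3*ε)*A + 4*ε^4 := by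
    simp only [hA]; ring
  have hden : 0 < (1+2*ε)*(1+ε-2*ε^2) := by nlinarith
  have hRHS : 0 < (1+ε-2*ε^2)*s*A + (1+3*ε)*A + 4*ε^4 := by
    have : 0 < (1+ε-2*ε^2) := by nlinarith
    positivity
  nlinarith [e, hden, hRHS]

/-- Fixed-point convergence of PnP-DRSdiff (Ryu et al.): if the data fidelity `f` is
`μ`-strongly convex, the denoiser residual `D - id` is `ε`-Lipschitz with `ε ∈ (0,1)`,
and `ε/((1 + ε - 2ε²)μ) < τ`, then the PnP-DRS operator
`T = ½ id + ½ (2D - id)∘(2 prox_{τf} - id)` is a contraction, has a unique fixed point,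
and the iterates converge to it from any initialization. -/
theorem pnp_drsdiff_fixed_point_convergence
    {E : Type*} [NormedAddCommGroup E] [InnerProductSpace ℝ E] [CompleteSpace E]
    (f : E → ℝ) (τ μ ε : ℝ) (hτ : 0 < τ) (hμ : 0 < μ)
    (hstrong : ConvexOn ℝ Set.univ (fun x => f x - (μ / 2) * ‖x‖ ^ 2))
    (hlsc : LowerSemicontinuous f)
    (P : E → E)
    (hP : ∀ v z : E,
      f (P v) + (1 / (2 * τ)) * ‖P v - v‖ ^ 2 ≤ f z + (1 / (2 * τ)) * ‖z - v‖ ^ 2)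
    (D : E → E) (hε : ε ∈ Set.Ioo (0 : ℝ) 1)
    (hres : ∀ u v : E, ‖(D u - u) - (D v - v)‖ ≤ ε * ‖u - v‖)
    (hτε : ε / ((1 + ε - 2 * ε ^ 2) * μ) < τ)
    (T : E → E)
    (hT : ∀ x : E, T x =
      (1 / 2 : ℝ) • x +
        (1 / 2 : ℝ) • ((2 : ℝ) • D ((2 : ℝ) • P x - x) - ((2 : ℝ) • P x - x))) :
    (∃ ρ : ℝ, 0 ≤ ρ ∧ ρ < 1 ∧ ∀ x y : E, ‖T x - T y‖ ≤ ρ * ‖x - y‖) ∧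
    ∃ xstar : E, T xstar = xstar ∧ (∀ x : E, T x = x → x = xstar) ∧
      ∀ x₀ : E, Tendsto (fun k : ℕ => T^[k] x₀) atTop (𝓝 xstar) := by
  obtain ⟨hε0, hε1⟩ := hε
  have hs0 : 0 < τ * μ := mul_pos hτ hμ
  have hfac : 0 < 1 + ε - 2*ε^2 := by nlinarith
  have hsε : ε < (τ*μ)*(1+ε-2*ε^2) := by
    rw [div_lt_iff₀ (by positivity)] at hτε
    nlinarith [hτε]
  have hmono := prox_strong_mono f τ μ hτ hμ hstrong P hP
  -- generic reduction: pointwise scalar bound gives Lipschitz bound for T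
  have hmain : ∀ k : ℝ,
      (∀ a b d : ℝ, 0 ≤ a → 0 ≤ b → 0 ≤ d → b^2 ≤ d^2 - 4*(τ*μ)*a^2 → (1+τ*μ)*a ≤ d →
        a + ε*b ≤ (ε+k)*d) →
      ∀ x y : E, ‖T x - T y‖ ≤ (ε+k)*‖x - y‖ := by
    intro k hpt x y
    have hm := hmono x y
    have hcs : ⟪x - y, P x - P y⟫ ≤ ‖x - y‖ * ‖P x - P y‖ := real_inner_le_norm _ _
    have hbsq : ‖(2:ℝ)•(P x - P y) - (x - y)‖^2
        = 4*‖P x - P y‖^2 - 4*⟪x - y, P x - P y⟫ + ‖x - y‖^2 := by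
      rw [norm_sub_sq_real, real_inner_smul_left, norm_smul, Real.norm_eq_abs,
        mul_pow, sq_abs, real_inner_comm]
      ring
    have hb2 : ‖(2:ℝ)•(P x - P y) - (x - y)‖^2
        ≤ ‖x - y‖^2 - 4*(τ*μ)*‖P x - P y‖^2 := by
      rw [hbsq]; nlinarith [hm]
    have had : (1+τ*μ)*‖P x - P y‖ ≤ ‖x - y‖ := by
      rcases (norm_nonneg (P x - P y)).eq_or_lt with h0 | h0
      · rw [← h0]; simpa using norm_nonneg (x - y)
      · have : ((1+τ*μ)*‖P x - P y‖) * ‖P x - P y‖ ≤ ‖x - y‖ * ‖P x - P y‖ := by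
          nlinarith [hm, hcs]
        exact le_of_mul_le_mul_right this h0
    have hTxy : T x - T y = (P x - P y) +
        ((D ((2:ℝ)•P x - x) - ((2:ℝ)•P x - x)) - (D ((2:ℝ)•P y - y) - ((2:ℝ)•P y - y))) := by
      rw [hT x, hT y]; module
    have hRxy : ((2:ℝ)•P x - x) - ((2:ℝ)•P y - y) = (2:ℝ)•(P x - P y) - (x - y) := by
      module
    calc ‖T x - T y‖
        ≤ ‖P x - P y‖ +
          ‖(D ((2:ℝ)•P x - x) - ((2:ℝ)•P x - x)) - (D ((2:ℝ)•P y - y) - ((2:ℝ)•P y - y))‖ := by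
          rw [hTxy]; exact norm_add_le _ _
      _ ≤ ‖P x - P y‖ + ε*‖((2:ℝ)•P x - x) - ((2:ℝ)•P y - y)‖ := by
          have := hres ((2:ℝ)•P x - x) ((2:ℝ)•P y - y)
          linarith
      _ = ‖P x - P y‖ + ε*‖(2:ℝ)•(P x - P y) - (x - y)‖ := by rw [hRxy]
      _ ≤ (ε+k)*‖x - y‖ :=
          hpt _ _ _ (norm_nonneg _) (norm_nonneg _) (norm_nonneg _) hb2 had
  have part1 : ∃ ρ : ℝ, 0 ≤ ρ ∧ ρ < 1 ∧ ∀ x y : E, ‖T x - T y‖ ≤ ρ * ‖x - y‖ := by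
    rcases lt_or_ge (1 + τ*μ) (4*ε*(τ*μ)) with hcase | hcase
    · -- interior case
      set k : ℝ := 1/(8*ε*(τ*μ)) with hk_def
      have hk : 8*ε*(τ*μ)*k = 1 := mul_one_div_cancel (by positivity)
      have hk0 : 0 < k := by positivity
      have hrho := case2_rho hs0 hε0 hε1 hsε hcase
      have hρ1 : ε + k < 1 := by
        have h8 : 0 < 8*ε*(τ*μ) := by positivity
        nlinarith [hk, hrho, h8]
      exact ⟨ε + k, by positivity, hρ1, hmain k (fun a b d ha hb hd hb2 had =>
        case2_pt hs0 hε0 hk ha hb hd hb2 had)⟩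
    · -- boundary case
      set k : ℝ := (1 + τ*μ - 2*ε*(τ*μ))/(1+τ*μ)^2 with hk_def
      have hk : k * (1+τ*μ)^2 = 1 + τ*μ - 2*ε*(τ*μ) := div_mul_cancel₀ _ (by positivity)
      have hk0 : 0 ≤ k := div_nonneg (by nlinarith) (by positivity)
      have hF := case1_F hs0 hε0 hε1 hsε
      have hρ1 : ε + k < 1 := by
        have h2 : k * (1+τ*μ)^2 < (1-ε) * (1+τ*μ)^2 := by
          rw [hk]; nlinarith [hF]
        have := lt_of_mul_lt_mul_right h2 (by positivity : (0:ℝ) ≤ (1+τ*μ)^2)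
        linarith
      exact ⟨ε + k, by positivity, hρ1, hmain k (fun a b d ha hb hd hb2 had =>
        case1_pt hs0 hε0 hk hcase ha hb hd hb2 had)⟩
  refine ⟨part1, ?_⟩
  obtain ⟨ρ, hρ0, hρ1, hlip⟩ := part1
  have hne : Nonempty E := ⟨0⟩
  have hlipW : LipschitzWith ⟨ρ, hρ0⟩ T := LipschitzWith.of_dist_le_mul fun x y => by
    rw [dist_eq_norm, dist_eq_norm]; exact hlip x y
  have hCW : ContractingWith ⟨ρ, hρ0⟩ T := ⟨by exact_mod_cast hρ1, hlipW⟩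
  exact ⟨ContractingWith.fixedPoint T hCW, hCW.fixedPoint_isFixedPt,
    fun x hx => hCW.fixedPoint_unique hx,
    fun x₀ => hCW.tendsto_iterate_fixedPoint x₀⟩
end

section
/- Let E be a real Hilbert space, D : E → E differentiable at x, and R(y) = (1/2)⟨y, y − D(y)⟩. Suppose the Jacobian of D at x is symmetric (⟨(DD)(x)u, v⟩ = ⟨u, (DD)(x)v⟩ for all u, v) and D is locally homogeneous at x in the differential sense, i.e., (DD)(x)(x) = D(x). Then the gradient of R at x equals the denoising residual: ∇R(x) = x − D(x). -/
open scoped RealInnerProductSpace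

/-- If the denoiser `D` has a symmetric Jacobian at `x` and is locally homogeneous at
`x` in the differential sense (`(DD)(x)(x) = D(x)`), then the gradient of the RED
regularizer `R(y) = ½⟨y, y - D(y)⟩` at `x` equals the denoising residual `x - D(x)`. -/
theorem red_gradient_eq_residual
    {E : Type*} [NormedAddCommGroup E] [InnerProductSpace ℝ E] [CompleteSpace E]
    (D : E → E) (x : E) (D' : E →L[ℝ] E) (hD : HasFDerivAt D D' x)
    (hsym : ∀ u v : E, ⟪D' u, v⟫ = ⟪u, D' v⟫)
    (hhom : D' x = D x)
    (R : E → ℝ) (hR : ∀ y : E, R y = (1 / 2) * ⟪y, y - D y⟫) :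
    HasGradientAt R (x - D x) x := by
  have hRe : R = fun y => (1 / 2 : ℝ) * ⟪y, y - D y⟫ := funext hR
  rw [hasGradientAt_iff_hasFDerivAt, hRe]
  have h1 : HasFDerivAt (fun y : E => y - D y) (ContinuousLinearMap.id ℝ E - D') x :=
    (hasFDerivAt_id x).sub hD
  have h2 := ((hasFDerivAt_id x).inner ℝ h1).const_mul (1/2 : ℝ)
  refine h2.congr_fderiv ?_
  ext u
  simp [fderivInnerCLM, real_inner_comm x u, inner_sub_left, inner_sub_right,
    ← hsym, hhom, real_inner_comm (D x) u]
  ring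
end

section
/- (α-averagedness of the RED-PG operator, Reehorst–Schniter Lemma 5) Let E be a real Hilbert space, f : E → ℝ convex and continuous, D : E → E nonexpansive (i.e., 1-Lipschitz), λ > 0 and L > 1. Define T : E → E by T(x) = prox_{f/(λL)}((1/L)D(x) + ((L−1)/L)x), i.e., T(x) is the unique minimizer of z ↦ f(z) + (λL/2)‖z − ((1/L)D(x) + ((L−1)/L)x)‖². Then T is α-averaged with α = max(2/(1+L), 2/3): there exists a nonexpansive map N : E → E such that T = (1−α)·id + α·N. -/
open scoped RealInnerProductSpace

private lemma prox_subgrad {E : Type*} [NormedAddCommGroup E] [InnerProductSpace ℝ E]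
    (f : E → ℝ) (hf : ConvexOn ℝ Set.univ f) (c : ℝ) (hc : 0 < c) (p v : E)
    (h : ∀ z, f p + c * ‖p - v‖ ^ 2 ≤ f z + c * ‖z - v‖ ^ 2) (w : E) :
    f p - f w ≤ 2 * c * ⟪p - v, w - p⟫ := by
  refine le_of_forall_pos_le_add fun ε hε => ?_
  set d := w - p with hd
  have hden : 0 < c * ‖d‖ ^ 2 + 1 := by positivity
  set t : ℝ := min 1 (ε / (c * ‖d‖ ^ 2 + 1)) with ht
  have ht0 : 0 < t := lt_min one_pos (div_pos hε hden)
  have ht1 : t ≤ 1 := min_le_left _ _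
  have hz := h (p + t • d)
  have hconv : f (p + t • d) ≤ (1 - t) * f p + t * f w := by
    have hcv := hf.2 (Set.mem_univ p) (Set.mem_univ w) (by linarith : (0:ℝ) ≤ 1 - t) ht0.le
      (by ring)
    have hzid : (1 - t) • p + t • w = p + t • d := by rw [hd]; module
    rw [hzid] at hcv
    simpa using hcv
  have hexp : ‖p + t • d - v‖ ^ 2 = ‖p - v‖ ^ 2 + 2 * t * ⟪p - v, d⟫ + t ^ 2 * ‖d‖ ^ 2 := by
    have h1 : p + t • d - v = (p - v) + t • d := by abel
    rw [h1, norm_add_sq_real, real_inner_smul_right, norm_smul, Real.norm_eq_abs, mul_pow,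
      sq_abs]
    ring
  rw [hexp] at hz
  have key : f p - f w ≤ 2 * c * ⟪p - v, d⟫ + c * t * ‖d‖ ^ 2 := by
    have h2 : t * (f p - f w) ≤ t * (2 * c * ⟪p - v, d⟫ + c * t * ‖d‖ ^ 2) := by nlinarith
    exact le_of_mul_le_mul_left h2 ht0
  have htb : c * t * ‖d‖ ^ 2 ≤ ε := by
    have h3 : t ≤ ε / (c * ‖d‖ ^ 2 + 1) := min_le_right _ _
    have h4 := (le_div_iff₀ hden).mp h3
    nlinarith
  linarith

set_option maxHeartbeats 1000000 in
/-- α-averagedness of the RED-PG operator (Reehorst–Schniter, Lemma 5): with `f` convex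
and continuous, `D` nonexpansive and `L > 1`, the operator
`T(x) = prox_{f/(λL)}((1/L)D(x) + ((L-1)/L)x)` is `α`-averaged with
`α = max (2/(1+L)) (2/3)`. -/
theorem red_pg_operator_averaged
    {E : Type*} [NormedAddCommGroup E] [InnerProductSpace ℝ E] [CompleteSpace E]
    (f : E → ℝ) (hf : ConvexOn ℝ Set.univ f) (hfc : Continuous f)
    (D : E → E) (hD : ∀ x y : E, ‖D x - D y‖ ≤ ‖x - y‖)
    (lam L : ℝ) (hlam : 0 < lam) (hL : 1 < L)
    (T : E → E)
    (hT : ∀ (x z : E),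
      f (T x) + (lam * L / 2) * ‖T x - ((1 / L) • D x + ((L - 1) / L) • x)‖ ^ 2
        ≤ f z + (lam * L / 2) * ‖z - ((1 / L) • D x + ((L - 1) / L) • x)‖ ^ 2) :
    ∃ N : E → E, (∀ x y : E, ‖N x - N y‖ ≤ ‖x - y‖) ∧
      ∀ x : E, T x = (1 - max (2 / (1 + L)) (2 / 3)) • x
        + (max (2 / (1 + L)) (2 / 3)) • N x := by
  have hL0 : (0:ℝ) < L := by linarith
  have hL1 : (0:ℝ) < L - 1 := by linarith
  set α : ℝ := max (2 / (1 + L)) (2 / 3) with hαdef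
  have hα23 : (2:ℝ)/3 ≤ α := le_max_right _ _
  have hα0 : 0 < α := lt_of_lt_of_le (by norm_num) hα23
  have hα1 : α < 1 := by
    apply max_lt
    · rw [div_lt_one (by linarith)]; linarith
    · norm_num
  -- key scalar fact:  (1-α) * L ≤ α * (L-1)
  have hkey : (1 - α) * L ≤ α * (L - 1) := by
    rcases le_total L 2 with h2 | h2
    · have hm : 2 / (1 + L) ≤ α := le_max_left _ _
      rw [div_le_iff₀ (by linarith : (0:ℝ) < 1 + L)] at hm
      nlinarith
    · nlinarith
  set c : ℝ := lam * L / 2 with hc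
  have hc0 : 0 < c := by positivity
  set B : E → E := fun x => (1 / L) • D x + ((L - 1) / L) • x with hB
  have hsub : ∀ x w, f (T x) - f w ≤ 2 * c * ⟪T x - B x, w - T x⟫ := fun x w =>
    prox_subgrad f hf c hc0 (T x) (B x) (fun z => hT x z) w
  -- firm nonexpansiveness
  have hfirm : ∀ x y, ‖T x - T y‖ ^ 2 ≤ ⟪B x - B y, T x - T y⟫ := by
    intro x y
    have h1 := hsub x (T y)
    have h2 := hsub y (T x)
    have hsum : 0 ≤ ⟪T x - B x, T y - T x⟫ + ⟪T y - B y, T x - T y⟫ := by nlinarith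
    have hexp : ⟪T x - B x, T y - T x⟫ + ⟪T y - B y, T x - T y⟫
        = ⟪B x - B y, T x - T y⟫ - ‖T x - T y‖ ^ 2 := by
      rw [← real_inner_self_eq_norm_sq]
      simp only [inner_sub_left, inner_sub_right]
      ring
    linarith
  -- the key pairwise inequality
  have hmain : ∀ x y : E, ‖T x - T y - (1 - α) • (x - y)‖ ≤ α * ‖x - y‖ := by
    intro x y
    set dx := x - y with hdx
    set dp := T x - T y with hdp
    set dd := D x - D y with hdd
    set dv := B x - B y with hdv
    have hdveq : dv = (1 / L) • dd + ((L - 1) / L) • dx := by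
      simp only [hdv, hdd, hdx, hB]
      module
    have hs : ((L:ℝ) - 1) / L = 1 - 1 / L := by field_simp
    set a : E := (1 / L) • (dx - dd) with ha
    have hxa : dx - dv = a := by rw [hdveq, hs, ha]; module
    set b : E := dv - dp with hb
    have hDle : ‖dd‖ ^ 2 ≤ ‖dx‖ ^ 2 := by
      have := hD x y
      nlinarith [norm_nonneg dd, norm_nonneg dx]
    have hdva : dv = dx - a := by rw [← hxa]; abel
    have hdda : dd = dx - L • a := by
      rw [ha, smul_smul]
      rw [show L * (1/L) = 1 by field_simp]
      module
    have eV : ‖dv‖ ^ 2 = ‖dx‖ ^ 2 - 2 * ⟪dx, a⟫ + ‖a‖ ^ 2 := by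
      rw [hdva, norm_sub_sq_real]
    have eD : ‖dd‖ ^ 2 = ‖dx‖ ^ 2 - 2 * L * ⟪dx, a⟫ + L ^ 2 * ‖a‖ ^ 2 := by
      rw [hdda, norm_sub_sq_real, real_inner_smul_right, norm_smul, Real.norm_eq_abs, mul_pow,
        sq_abs]
      ring
    -- s2 : ‖dv‖² + (L-1)‖a‖² ≤ ‖dx‖²
    have s2 : ‖dv‖ ^ 2 + (L - 1) * ‖a‖ ^ 2 ≤ ‖dx‖ ^ 2 := by nlinarith [eV, eD, hDle, hL0]
    -- s1 : ‖dp‖² + ‖b‖² ≤ ‖dv‖²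
    have eB : ‖b‖ ^ 2 = ‖dv‖ ^ 2 - 2 * ⟪dv, dp⟫ + ‖dp‖ ^ 2 := by
      rw [hb, norm_sub_sq_real]
    have s1 : ‖dp‖ ^ 2 + ‖b‖ ^ 2 ≤ ‖dv‖ ^ 2 := by
      have hfxy := hfirm x y
      linarith [eB, hfxy]
    -- s3 : (L-1) * ‖dx - dp‖² ≤ L(L-1)‖a‖² + L‖b‖²
    have hq : dx - dp = a + b := by rw [← hxa, hb]; abel
    have eQ : ‖dx - dp‖ ^ 2 = ‖a‖ ^ 2 + 2 * ⟪a, b⟫ + ‖b‖ ^ 2 := by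
      rw [hq, norm_add_sq_real]
    have hint : (0:ℝ) ≤ (L - 1) ^ 2 * ‖a‖ ^ 2 - 2 * (L - 1) * ⟪a, b⟫ + ‖b‖ ^ 2 := by
      have h0 := sq_nonneg ‖(L - 1) • a - b‖
      rw [norm_sub_sq_real, real_inner_smul_left, norm_smul, Real.norm_eq_abs, mul_pow,
        sq_abs] at h0
      linarith [h0]
    have s3 : (L - 1) * ‖dx - dp‖ ^ 2 ≤ L * (L - 1) * ‖a‖ ^ 2 + L * ‖b‖ ^ 2 := by
      rw [eQ]; nlinarith [hint]
    -- combine: α‖dp‖² + (1-α)‖dx-dp‖² ≤ α‖dx‖²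
    have comb : α * ‖dp‖ ^ 2 + (1 - α) * ‖dx - dp‖ ^ 2 ≤ α * ‖dx‖ ^ 2 := by
      have c1 : ‖dp‖ ^ 2 + ‖b‖ ^ 2 + (L - 1) * ‖a‖ ^ 2 ≤ ‖dx‖ ^ 2 := by linarith
      have hα1' : (0:ℝ) ≤ 1 - α := by linarith
      have h2 := mul_le_mul_of_nonneg_left s3 hα1'
      have h3 := mul_le_mul_of_nonneg_right hkey (mul_nonneg hL1.le (sq_nonneg ‖a‖))
      have h4 := mul_le_mul_of_nonneg_right hkey (sq_nonneg ‖b‖)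
      have h5 := mul_le_mul_of_nonneg_left c1 (mul_nonneg hα0.le hL1.le)
      have h6 : (L - 1) * (α * ‖dp‖ ^ 2 + (1 - α) * ‖dx - dp‖ ^ 2) ≤
          (L - 1) * (α * ‖dx‖ ^ 2) := by nlinarith [h2, h3, h4, h5]
      exact le_of_mul_le_mul_left h6 hL1
    -- final: expand the goal norm
    have eG : ‖dp - (1 - α) • dx‖ ^ 2 = ‖dp‖ ^ 2 - 2 * (1 - α) * ⟪dp, dx⟫
        + (1 - α) ^ 2 * ‖dx‖ ^ 2 := by
      rw [norm_sub_sq_real, real_inner_smul_right, norm_smul, Real.norm_eq_abs, mul_pow, sq_abs]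
      ring
    have eQ2 : ‖dx - dp‖ ^ 2 = ‖dx‖ ^ 2 - 2 * ⟪dp, dx⟫ + ‖dp‖ ^ 2 := by
      rw [norm_sub_sq_real, real_inner_comm]
    rw [eQ2] at comb
    have hsq : ‖dp - (1 - α) • dx‖ ^ 2 ≤ (α * ‖dx‖) ^ 2 := by
      have hrhs : (α * ‖dx‖) ^ 2 = α ^ 2 * ‖dx‖ ^ 2 := by ring
      rw [eG, hrhs]; nlinarith [comb]
    have hfin := Real.sqrt_le_sqrt hsq
    rwa [Real.sqrt_sq (norm_nonneg _), Real.sqrt_sq (by positivity)] at hfin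
  -- build N
  refine ⟨fun x => α⁻¹ • (T x - (1 - α) • x), ?_, ?_⟩
  · intro x y
    have hdiff : α⁻¹ • (T x - (1 - α) • x) - α⁻¹ • (T y - (1 - α) • y)
        = α⁻¹ • (T x - T y - (1 - α) • (x - y)) := by
      rw [← smul_sub]; congr 1; rw [smul_sub]; abel
    rw [hdiff, norm_smul, Real.norm_eq_abs, abs_of_pos (inv_pos.mpr hα0)]
    rw [inv_mul_le_iff₀ hα0]
    exact hmain x y
  · intro x
    rw [smul_smul, mul_inv_cancel₀ hα0.ne', one_smul]
    abel
end

section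
/- (Convergence of RED-PG, Reehorst–Schniter Theorem 2) Let E be a finite-dimensional real inner product space, f : E → ℝ convex and continuous, D : E → E nonexpansive (1-Lipschitz), λ > 0 and L > 1. Define T(x) = prox_{f/(λL)}((1/L)D(x) + ((L−1)/L)x), and suppose T has at least one fixed point. Then for any initialization x₀ ∈ E, the iterates x_{k+1} = T(x_k) converge to a fixed point of T. -/
open Filter Topology
open scoped RealInnerProductSpace

set_option maxHeartbeats 1000000 in
/-- Convergence of RED-PG (Reehorst–Schniter, Theorem 2): in finite dimension, with `f`
convex continuous, `D` nonexpansive, `L > 1`, and assuming the RED-PG operator `T` has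
a fixed point, the iterates `x_{k+1} = T(x_k)` converge to a fixed point of `T`. -/
theorem red_pg_convergence
    {E : Type*} [NormedAddCommGroup E] [InnerProductSpace ℝ E] [FiniteDimensional ℝ E]
    (f : E → ℝ) (hf : ConvexOn ℝ Set.univ f) (hfc : Continuous f)
    (D : E → E) (hD : ∀ x y : E, ‖D x - D y‖ ≤ ‖x - y‖)
    (lam L : ℝ) (hlam : 0 < lam) (hL : 1 < L)
    (T : E → E)
    (hT : ∀ (x z : E),
      f (T x) + (lam * L / 2) * ‖T x - ((1 / L) • D x + ((L - 1) / L) • x)‖ ^ 2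
        ≤ f z + (lam * L / 2) * ‖z - ((1 / L) • D x + ((L - 1) / L) • x)‖ ^ 2)
    (hfix : ∃ xf : E, T xf = xf) :
    ∀ x₀ : E, ∃ xf : E, T xf = xf ∧ Tendsto (fun k : ℕ => T^[k] x₀) atTop (𝓝 xf) := by
  obtain ⟨xf, hxf⟩ := hfix
  have hL0 : (0:ℝ) < L := by linarith
  have hlL : (0:ℝ) < lam * L := by positivity
  set G : E → E := fun x => (1 / L) • D x + ((L - 1) / L) • x with hG
  have hT' : ∀ x z : E, f (T x) + (lam * L / 2) * ‖T x - G x‖ ^ 2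
      ≤ f z + (lam * L / 2) * ‖z - G x‖ ^ 2 := fun x z => hT x z
  -- Step 1: the prox subgradient inequality
  have key : ∀ x z : E, (lam * L) * ⟪G x - T x, z - T x⟫ ≤ f z - f (T x) := by
    intro x z
    have hstep : ∀ t : ℝ, 0 < t → t ≤ 1 →
        f (T x) - f z ≤ (lam * L) * ⟪T x - G x, z - T x⟫
          + (lam * L / 2) * t * ‖z - T x‖ ^ 2 := by
      intro t ht ht1
      have hconv := hf.2 (Set.mem_univ (T x)) (Set.mem_univ z)
        (by linarith : (0:ℝ) ≤ 1 - t) ht.le (by ring)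
      have hmin := hT' x ((1 - t) • T x + t • z)
      have hrw : (1 - t) • T x + t • z - G x = (T x - G x) + t • (z - T x) := by
        rw [sub_smul, smul_sub, one_smul]; abel
      have hexp : ‖(1 - t) • T x + t • z - G x‖ ^ 2
          = ‖T x - G x‖ ^ 2 + 2 * (t * ⟪T x - G x, z - T x⟫) + t ^ 2 * ‖z - T x‖ ^ 2 := by
        rw [hrw, norm_add_sq_real, real_inner_smul_right, norm_smul, Real.norm_eq_abs,
          abs_of_pos ht, mul_pow]
      rw [hexp] at hmin
      simp only [smul_eq_mul] at hconv
      have hmul : t * (f (T x) - f z) ≤ t * ((lam * L) * ⟪T x - G x, z - T x⟫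
          + (lam * L / 2) * t * ‖z - T x‖ ^ 2) := by nlinarith [hmin, hconv]
      exact (mul_le_mul_iff_right₀ ht).1 hmul
    have h0 : f (T x) - f z ≤ (lam * L) * ⟪T x - G x, z - T x⟫ := by
      apply le_of_forall_pos_le_add
      intro ε hε
      set M := (lam * L / 2) * ‖z - T x‖ ^ 2 with hM
      have hM0 : 0 ≤ M := by positivity
      have htpos : 0 < min 1 (ε / (M + 1)) := lt_min one_pos (by positivity)
      have hst := hstep _ htpos (min_le_left _ _)
      have hle : (lam * L / 2) * (min 1 (ε / (M + 1))) * ‖z - T x‖ ^ 2 ≤ ε := by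
        have h1 : min 1 (ε / (M + 1)) ≤ ε / (M + 1) := min_le_right _ _
        have h2 : (lam * L / 2) * (min 1 (ε / (M + 1))) * ‖z - T x‖ ^ 2
            = M * min 1 (ε / (M + 1)) := by rw [hM]; ring
        rw [h2]
        calc M * min 1 (ε / (M + 1)) ≤ M * (ε / (M + 1)) :=
              mul_le_mul_of_nonneg_left h1 hM0
          _ ≤ ε := by
              rw [mul_div_assoc', div_le_iff₀ (by positivity)]
              nlinarith
      linarith
    have hneg : G x - T x = -(T x - G x) := by abel
    rw [hneg, inner_neg_left]
    linarith
  -- Step 2: firm nonexpansiveness of T relative to G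
  have firm : ∀ x y : E, ‖T x - T y‖ ^ 2 ≤ ⟪G x - G y, T x - T y⟫ := by
    intro x y
    have h1 := key x (T y)
    have h2 := key y (T x)
    have hsum : ⟪G x - T x, T y - T x⟫ + ⟪G y - T y, T x - T y⟫ ≤ 0 := by
      nlinarith [add_le_add h1 h2, hlL]
    have e1 : G x - T x = (G x - G y) - (T x - T y) + (G y - T y) := by abel
    have e2 : T y - T x = -(T x - T y) := by abel
    have halg : ⟪G x - T x, T y - T x⟫ + ⟪G y - T y, T x - T y⟫
        = ‖T x - T y‖ ^ 2 - ⟪G x - G y, T x - T y⟫ := by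
      rw [e1, e2, inner_add_left, inner_sub_left, inner_neg_right, inner_neg_right,
        inner_neg_right, real_inner_self_eq_norm_sq]
      ring
    linarith
  -- Step 3: averagedness of G
  have avg : ∀ x y : E, ‖G x - G y‖ ^ 2 + (L - 1) * ‖(x - G x) - (y - G y)‖ ^ 2
      ≤ ‖x - y‖ ^ 2 := by
    intro x y
    have hq : ‖D x - D y‖ ^ 2 ≤ ‖x - y‖ ^ 2 := by
      nlinarith [hD x y, norm_nonneg (D x - D y), norm_nonneg (x - y)]
    have e1 : G x - G y = (1 / L) • (D x - D y) + ((L - 1) / L) • (x - y) := by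
      simp only [hG, smul_sub]; abel
    have e2 : (x - G x) - (y - G y) = (1 / L) • ((x - y) - (D x - D y)) := by
      simp only [hG, smul_sub]
      rw [show (1 / L : ℝ) • x = x - ((L - 1) / L) • x by
        rw [eq_sub_iff_add_eq, ← add_smul]; rw [show (1/L + (L-1)/L : ℝ) = 1 by field_simp; ring, one_smul],
        show (1 / L : ℝ) • y = y - ((L - 1) / L) • y by
        rw [eq_sub_iff_add_eq, ← add_smul]; rw [show (1/L + (L-1)/L : ℝ) = 1 by field_simp; ring, one_smul]]
      abel
    have n1 : ‖G x - G y‖ ^ 2 = (1/L)^2 * ‖D x - D y‖^2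
        + 2 * ((1/L) * (((L-1)/L) * ⟪D x - D y, x - y⟫))
        + ((L-1)/L)^2 * ‖x - y‖^2 := by
      rw [e1, norm_add_sq_real, real_inner_smul_left, real_inner_smul_right,
        norm_smul, norm_smul, Real.norm_eq_abs, Real.norm_eq_abs,
        abs_of_pos (by positivity : (0:ℝ) < 1/L),
        abs_of_pos (div_pos (by linarith) hL0), mul_pow, mul_pow]
    have n2 : ‖(x - G x) - (y - G y)‖ ^ 2
        = (1/L)^2 * (‖x - y‖^2 - 2 * ⟪D x - D y, x - y⟫ + ‖D x - D y‖^2) := by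
      rw [e2, norm_smul, Real.norm_eq_abs, abs_of_pos (by positivity : (0:ℝ) < 1/L),
        mul_pow, norm_sub_sq_real, real_inner_comm (x - y) (D x - D y)]
    have hLne : (L:ℝ) ≠ 0 := ne_of_gt hL0
    calc ‖G x - G y‖ ^ 2 + (L - 1) * ‖(x - G x) - (y - G y)‖ ^ 2
        = (L * ‖D x - D y‖ ^ 2 + (L ^ 2 - L) * ‖x - y‖ ^ 2) / L ^ 2 := by
          rw [n1, n2]; field_simp; ring
      _ ≤ ‖x - y‖ ^ 2 := by
          rw [div_le_iff₀ (by positivity)]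
          nlinarith [hq, hL0]
  -- Step 4: the contraction-type inequality for T
  set β : ℝ := min (L - 1) 1 / 2 with hβdef
  have hβ : 0 < β := by
    have : (0:ℝ) < min (L - 1) 1 := lt_min (by linarith) one_pos
    positivity
  have key2 : ∀ x y : E, ‖T x - T y‖ ^ 2 + β * ‖(x - T x) - (y - T y)‖ ^ 2
      ≤ ‖x - y‖ ^ 2 := by
    intro x y
    set u := (x - G x) - (y - G y) with hu
    set w := (G x - T x) - (G y - T y) with hw
    have hfw : ‖T x - T y‖ ^ 2 + ‖w‖ ^ 2 ≤ ‖G x - G y‖ ^ 2 := by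
      have h1 := firm x y
      have e : G x - G y = w + (T x - T y) := by rw [hw]; abel
      have e3 : ‖G x - G y‖ ^ 2 = ‖w‖ ^ 2 + 2 * ⟪w, T x - T y⟫ + ‖T x - T y‖ ^ 2 := by
        rw [e, norm_add_sq_real]
      have e4 : ⟪G x - G y, T x - T y⟫ = ⟪w, T x - T y⟫ + ‖T x - T y‖ ^ 2 := by
        rw [e, inner_add_left, real_inner_self_eq_norm_sq]
      rw [e3]
      rw [e4] at h1
      linarith
    have havg := avg x y
    have hsum : (x - T x) - (y - T y) = u + w := by rw [hu, hw]; abel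
    have hquad : ‖u + w‖ ^ 2 ≤ 2 * ‖u‖ ^ 2 + 2 * ‖w‖ ^ 2 := by
      rw [norm_add_sq_real]
      nlinarith [real_inner_le_norm u w, sq_nonneg (‖u‖ - ‖w‖)]
    have h2β1 : 2 * β ≤ 1 := by
      rw [hβdef]; have := min_le_right (L - 1) 1; linarith
    have h2β2 : 2 * β ≤ L - 1 := by
      rw [hβdef]; have := min_le_left (L - 1) 1; linarith
    rw [hsum]
    have hb1 : β * ‖u + w‖ ^ 2 ≤ β * (2 * ‖u‖ ^ 2 + 2 * ‖w‖ ^ 2) :=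
      mul_le_mul_of_nonneg_left hquad hβ.le
    have hb2 : (2 * β) * ‖u‖ ^ 2 ≤ (L - 1) * ‖u‖ ^ 2 :=
      mul_le_mul_of_nonneg_right h2β2 (sq_nonneg _)
    have hb3 : (2 * β) * ‖w‖ ^ 2 ≤ 1 * ‖w‖ ^ 2 :=
      mul_le_mul_of_nonneg_right h2β1 (sq_nonneg _)
    nlinarith [hfw, havg]
  -- T is nonexpansive
  have hTlip : ∀ x y : E, ‖T x - T y‖ ≤ ‖x - y‖ := by
    intro x y
    have h := key2 x y
    have h2 : ‖T x - T y‖ ^ 2 ≤ ‖x - y‖ ^ 2 := by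
      nlinarith [mul_nonneg hβ.le (sq_nonneg ‖(x - T x) - (y - T y)‖)]
    have := Real.sqrt_le_sqrt h2
    rwa [Real.sqrt_sq (norm_nonneg _), Real.sqrt_sq (norm_nonneg _)] at this
  have hTc : Continuous T := by
    have : LipschitzWith 1 T := LipschitzWith.of_dist_le_mul fun x y => by
      simpa [dist_eq_norm] using hTlip x y
    exact this.continuous
  -- the iterates
  intro x₀
  set s : ℕ → E := fun k => T^[k] x₀ with hs
  have hs1 : ∀ k, s (k + 1) = T (s k) := fun k => Function.iterate_succ_apply' T k x₀
  have hmono : ∀ (y : E), T y = y → ∀ k, ‖s (k + 1) - y‖ ≤ ‖s k - y‖ := by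
    intro y hy k
    rw [hs1]
    calc ‖T (s k) - y‖ = ‖T (s k) - T y‖ := by rw [hy]
      _ ≤ ‖s k - y‖ := hTlip _ _
  -- boundedness
  have hbdd : ∀ k, ‖s k - xf‖ ≤ ‖x₀ - xf‖ := by
    intro k
    induction k with
    | zero => simp [hs]
    | succ n ih => exact (hmono xf hxf n).trans ih
  -- increments tend to zero
  have hkey2' : ∀ k, ‖s (k + 1) - xf‖ ^ 2 + β * ‖s k - s (k + 1)‖ ^ 2 ≤ ‖s k - xf‖ ^ 2 := by
    intro k
    have h := key2 (s k) xf
    rw [hxf, sub_self, sub_zero, ← hs1] at h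
    exact h
  set e : ℕ → ℝ := fun k => ‖s k - xf‖ ^ 2 with he
  have he_anti : Antitone e := by
    apply antitone_nat_of_succ_le
    intro k
    show ‖s (k + 1) - xf‖ ^ 2 ≤ ‖s k - xf‖ ^ 2
    have := hkey2' k
    nlinarith [mul_nonneg hβ.le (sq_nonneg ‖s k - s (k + 1)‖)]
  have he_bdd : BddBelow (Set.range e) := ⟨0, by rintro y ⟨k, rfl⟩; positivity⟩
  have he_conv : Tendsto e atTop (𝓝 (⨅ k, e k)) := tendsto_atTop_ciInf he_anti he_bdd
  have he_shift : Tendsto (fun k => e (k + 1)) atTop (𝓝 (⨅ k, e k)) :=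
    (tendsto_add_atTop_iff_nat 1).2 he_conv
  have hdiff : Tendsto (fun k => e k - e (k + 1)) atTop (𝓝 0) := by
    simpa using he_conv.sub he_shift
  have hincr_sq : Tendsto (fun k => ‖s k - s (k + 1)‖ ^ 2) atTop (𝓝 0) := by
    apply squeeze_zero (fun k => sq_nonneg _) (g := fun k => (e k - e (k + 1)) / β)
    · intro k
      rw [le_div_iff₀ hβ]
      show ‖s k - s (k + 1)‖ ^ 2 * β ≤ ‖s k - xf‖ ^ 2 - ‖s (k + 1) - xf‖ ^ 2
      have := hkey2' k
      nlinarith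
    · simpa using hdiff.div_const β
  have hincr : Tendsto (fun k => s (k + 1) - s k) atTop (𝓝 0) := by
    rw [tendsto_zero_iff_norm_tendsto_zero]
    have heq : ∀ k, Real.sqrt (‖s k - s (k + 1)‖ ^ 2) = ‖s (k + 1) - s k‖ := fun k => by
      rw [Real.sqrt_sq (norm_nonneg _), norm_sub_rev]
    have h1 : Tendsto (fun k => Real.sqrt (‖s k - s (k + 1)‖ ^ 2)) atTop (𝓝 (Real.sqrt 0)) :=
      (Real.continuous_sqrt.tendsto 0).comp hincr_sq
    simpa [heq] using h1
  -- Bolzano-Weierstrass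
  have hball : ∀ k, s k ∈ Metric.closedBall xf (‖x₀ - xf‖) := by
    intro k
    rw [Metric.mem_closedBall, dist_eq_norm]
    exact hbdd k
  obtain ⟨xs, -, φ, hφ, hconv⟩ :=
    tendsto_subseq_of_bounded Metric.isBounded_closedBall hball
  have hfixstar : T xs = xs := by
    have h1 : Tendsto (fun k => T (s (φ k))) atTop (𝓝 (T xs)) :=
      (hTc.tendsto xs).comp hconv
    have h3 : Tendsto (fun k => s (φ k + 1) - s (φ k)) atTop (𝓝 0) :=
      hincr.comp hφ.tendsto_atTop
    have h2 : Tendsto (fun k => s (φ k + 1)) atTop (𝓝 xs) := by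
      have h4 := hconv.add h3
      have h5 : (fun k => (s ∘ φ) k + (s (φ k + 1) - s (φ k))) = fun k => s (φ k + 1) :=
        funext fun k => by simp only [Function.comp_apply]; abel
      rw [h5] at h4
      simpa using h4
    have heq2 : (fun k => T (s (φ k))) = fun k => s (φ k + 1) :=
      funext fun k => (hs1 (φ k)).symm
    exact tendsto_nhds_unique (heq2 ▸ h1) h2
  refine ⟨xs, hfixstar, ?_⟩
  show Tendsto s atTop (𝓝 xs)
  have hdist_anti : Antitone fun k => ‖s k - xs‖ :=
    antitone_nat_of_succ_le (hmono xs hfixstar)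
  have hdist_sub : Tendsto (fun k => ‖s (φ k) - xs‖) atTop (𝓝 0) := by
    have h5 : Tendsto (fun k => (s ∘ φ) k - xs) atTop (𝓝 (xs - xs)) :=
      hconv.sub tendsto_const_nhds
    have := h5.norm
    simp only [sub_self, norm_zero, Function.comp] at this
    exact this
  have hm : Tendsto (fun k => ‖s k - xs‖) atTop (𝓝 (⨅ k, ‖s k - xs‖)) :=
    tendsto_atTop_ciInf hdist_anti ⟨0, by rintro y ⟨k, rfl⟩; positivity⟩
  have hiInf0 : (⨅ k, ‖s k - xs‖) = 0 :=
    tendsto_nhds_unique (hm.comp hφ.tendsto_atTop) hdist_sub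
  rw [hiInf0] at hm
  rwa [← tendsto_iff_norm_sub_tendsto_zero] at hm
end

section
/- (Tweedie's formula) Let p : ℝⁿ → ℝ be a nonnegative measurable probability density (∫ p = 1) with finite first moment ∫ ‖x‖ p(x) dx < ∞, and let σ > 0. Define the Gaussian-smoothed density p_σ(z) = ∫ (2πσ²)^{−n/2} exp(−‖z − x‖²/(2σ²)) p(x) dx and the posterior mean m(z) = (∫ x (2πσ²)^{−n/2} exp(−‖z − x‖²/(2σ²)) p(x) dx) / p_σ(z). Then p_σ(z) > 0 for every z, p_σ is differentiable on ℝⁿ, and its gradient satisfies σ² ∇p_σ(z) = (∫ x (2πσ²)^{−n/2} exp(−‖z − x‖²/(2σ²)) p(x) dx) − z·p_σ(z); equivalently, m(z) − z = σ² ∇ log p_σ(z), i.e., the minimum mean-squared-error Gaussian denoiser equals z plus σ² times the score of the noisy density. -/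
open MeasureTheory
open scoped RealInnerProductSpace

/-- The Gaussian kernel `(2πσ²)^{-n/2} exp(-‖z - x‖²/(2σ²))` on `ℝⁿ`. -/
noncomputable def gaussKer (n : ℕ) (σ : ℝ) (z x : EuclideanSpace ℝ (Fin n)) : ℝ :=
  (2 * Real.pi * σ ^ 2) ^ (-(n : ℝ) / 2) * Real.exp (-‖z - x‖ ^ 2 / (2 * σ ^ 2))

/-- The Gaussian-smoothed density `p_σ(z) = ∫ (2πσ²)^{-n/2} exp(-‖z-x‖²/(2σ²)) p(x) dx`. -/
noncomputable def smoothedDensity (n : ℕ) (σ : ℝ) (p : EuclideanSpace ℝ (Fin n) → ℝ)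
    (z : EuclideanSpace ℝ (Fin n)) : ℝ :=
  ∫ x, gaussKer n σ z x * p x

/-- The unnormalized posterior first moment `∫ x (2πσ²)^{-n/2} exp(-‖z-x‖²/(2σ²)) p(x) dx`. -/
noncomputable def posteriorMoment (n : ℕ) (σ : ℝ) (p : EuclideanSpace ℝ (Fin n) → ℝ)
    (z : EuclideanSpace ℝ (Fin n)) : EuclideanSpace ℝ (Fin n) :=
  ∫ x, (gaussKer n σ z x * p x) • x

lemma gaussKer_pos {n : ℕ} {σ : ℝ} (hσ : 0 < σ) (z x : EuclideanSpace ℝ (Fin n)) :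
    0 < gaussKer n σ z x :=
  mul_pos (Real.rpow_pos_of_pos (by positivity) _) (Real.exp_pos _)

lemma gaussKer_le {n : ℕ} {σ : ℝ} (hσ : 0 < σ) (z x : EuclideanSpace ℝ (Fin n)) :
    gaussKer n σ z x ≤ (2 * Real.pi * σ ^ 2) ^ (-(n : ℝ) / 2) := by
  have harg : -‖z - x‖ ^ 2 / (2 * σ ^ 2) ≤ 0 := by
    apply div_nonpos_of_nonpos_of_nonneg <;> [simp [sq_nonneg]; positivity]
  have h1 : Real.exp (-‖z - x‖ ^ 2 / (2 * σ ^ 2)) ≤ 1 := Real.exp_le_one_iff.mpr harg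
  have h2 : (0:ℝ) < (2 * Real.pi * σ ^ 2) ^ (-(n : ℝ) / 2) :=
    Real.rpow_pos_of_pos (by positivity) _
  have := mul_le_mul_of_nonneg_left h1 h2.le
  simpa [gaussKer] using this

lemma gauss_exp_mul_le {σ : ℝ} (hσ : 0 < σ) (t : ℝ) (ht : 0 ≤ t) :
    t * Real.exp (-t ^ 2 / (2 * σ ^ 2)) ≤ 2 * σ := by
  have harg : -t ^ 2 / (2 * σ ^ 2) ≤ 0 := by
    apply div_nonpos_of_nonpos_of_nonneg <;> [simp [sq_nonneg]; positivity]
  have hep : 0 < Real.exp (-t ^ 2 / (2 * σ ^ 2)) := Real.exp_pos _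
  rcases le_or_gt t σ with h | h
  · have h1 : Real.exp (-t ^ 2 / (2 * σ ^ 2)) ≤ 1 := Real.exp_le_one_iff.mpr harg
    nlinarith
  · have ht0' : 0 < t := lt_trans hσ h
    have hs : 0 < t ^ 2 / (2 * σ ^ 2) := by positivity
    have h2 : Real.exp (-t ^ 2 / (2 * σ ^ 2)) ≤ (t ^ 2 / (2 * σ ^ 2))⁻¹ := by
      rw [show -t ^ 2 / (2 * σ ^ 2) = -(t ^ 2 / (2 * σ ^ 2)) by ring, Real.exp_neg]
      exact inv_anti₀ hs (by linarith [Real.add_one_le_exp (t ^ 2 / (2 * σ ^ 2))])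
    have h3 : (t ^ 2 / (2 * σ ^ 2))⁻¹ = 2 * σ ^ 2 / t ^ 2 := inv_div _ _
    rw [h3] at h2
    have h4 : t * Real.exp (-t ^ 2 / (2 * σ ^ 2)) ≤ t * (2 * σ ^ 2 / t ^ 2) := by gcongr
    have h5 : t * (2 * σ ^ 2 / t ^ 2) = 2 * σ ^ 2 / t := by field_simp
    have h6 : 2 * σ ^ 2 / t ≤ 2 * σ := by rw [div_le_iff₀ ht0']; nlinarith
    linarith [h5 ▸ h4]

/-- Product of kernel and distance is uniformly bounded. -/
lemma gaussKer_mul_norm_le {n : ℕ} {σ : ℝ} (hσ : 0 < σ) (z x : EuclideanSpace ℝ (Fin n)) :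
    gaussKer n σ z x * ‖x - z‖ ≤ (2 * Real.pi * σ ^ 2) ^ (-(n : ℝ) / 2) * (2 * σ) := by
  have h := gauss_exp_mul_le hσ ‖z - x‖ (norm_nonneg _)
  have h2 : (0:ℝ) < (2 * Real.pi * σ ^ 2) ^ (-(n : ℝ) / 2) :=
    Real.rpow_pos_of_pos (by positivity) _
  have hrev : ‖x - z‖ = ‖z - x‖ := norm_sub_rev _ _
  rw [gaussKer, hrev]
  calc (2 * Real.pi * σ ^ 2) ^ (-(n : ℝ) / 2) * Real.exp (-‖z - x‖ ^ 2 / (2 * σ ^ 2)) * ‖z - x‖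
      = (2 * Real.pi * σ ^ 2) ^ (-(n : ℝ) / 2) *
        (‖z - x‖ * Real.exp (-‖z - x‖ ^ 2 / (2 * σ ^ 2))) := by ring
    _ ≤ (2 * Real.pi * σ ^ 2) ^ (-(n : ℝ) / 2) * (2 * σ) := by gcongr

lemma hasFDerivAt_gaussKer {n : ℕ} {σ : ℝ} (hσ : 0 < σ) (x z : EuclideanSpace ℝ (Fin n)) :
    HasFDerivAt (fun z' => gaussKer n σ z' x)
      ((gaussKer n σ z x * (σ ^ 2)⁻¹) • innerSL ℝ (x - z)) z := by
  have h1 : HasFDerivAt (fun z' : EuclideanSpace ℝ (Fin n) => ‖z' - x‖ ^ 2)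
      (2 • ((innerSL ℝ (z - x)).comp (ContinuousLinearMap.id ℝ _))) z :=
    ((hasFDerivAt_id z).sub_const x).norm_sq
  have h2 := h1.const_smul (-(2 * σ ^ 2)⁻¹)
  have hfun : (-(2 * σ ^ 2)⁻¹ • fun z' : EuclideanSpace ℝ (Fin n) => ‖z' - x‖ ^ 2)
      = fun z' => -‖z' - x‖ ^ 2 / (2 * σ ^ 2) := by
    funext z'; simp [smul_eq_mul]; ring
  rw [hfun] at h2
  have h3 := (h2.exp).const_mul ((2 * Real.pi * σ ^ 2) ^ (-(n : ℝ) / 2))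
  have hσ2 : σ ^ 2 ≠ 0 := by positivity
  refine h3.congr_fderiv ?_
  ext y
  simp [gaussKer, ContinuousLinearMap.smul_apply, smul_eq_mul, inner_sub_left]
  field_simp
  ring

/-- Tweedie's formula: for a probability density `p` with finite first moment and `σ > 0`,
the smoothed density `p_σ` is everywhere positive and differentiable, with
`σ² ∇p_σ(z) = (∫ x G_σ(z-x) p(x) dx) - z p_σ(z)`; equivalently, the MMSE denoiser
`m(z) = E[x | z]` satisfies `m(z) - z = σ² ∇ log p_σ(z)`. -/
theorem tweedie_formula (n : ℕ) (σ : ℝ) (hσ : 0 < σ)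
    (p : EuclideanSpace ℝ (Fin n) → ℝ)
    (hmeas : Measurable p) (hnn : ∀ x, 0 ≤ p x)
    (hprob : ∫ x, p x = 1)
    (hmom : Integrable (fun x : EuclideanSpace ℝ (Fin n) => ‖x‖ * p x)) :
    (∀ z, 0 < smoothedDensity n σ p z) ∧
    ∀ z, ∃ g : EuclideanSpace ℝ (Fin n),
      HasGradientAt (smoothedDensity n σ p) g z ∧
      σ ^ 2 • g = posteriorMoment n σ p z - smoothedDensity n σ p z • z := by
  set C : ℝ := (2 * Real.pi * σ ^ 2) ^ (-(n : ℝ) / 2) with hC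
  have hCpos : 0 < C := Real.rpow_pos_of_pos (by positivity) _
  have hσ2 : (σ:ℝ) ^ 2 ≠ 0 := by positivity
  -- p is integrable
  have hpint : Integrable p := by
    by_contra h
    rw [integral_undef h] at hprob
    norm_num at hprob
  have hcont : ∀ z : EuclideanSpace ℝ (Fin n), Continuous (fun x => gaussKer n σ z x) := by
    intro z; unfold gaussKer; fun_prop
  have int1 : ∀ z : EuclideanSpace ℝ (Fin n), Integrable (fun x => gaussKer n σ z x * p x) := by
    intro z
    refine hpint.bdd_mul ((hcont z).aestronglyMeasurable) (c := C) (Filter.Eventually.of_forall fun x => ?_)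
    rw [Real.norm_eq_abs, abs_of_pos (gaussKer_pos hσ z x)]
    exact gaussKer_le hσ z x
  have int2 : ∀ z : EuclideanSpace ℝ (Fin n),
      Integrable (fun x => (gaussKer n σ z x * p x) • x) := by
    intro z
    refine Integrable.mono' (hmom.const_mul C) ?_ ?_
    · exact (((hcont z).measurable.mul hmeas).smul measurable_id).aestronglyMeasurable
    · filter_upwards with x
      rw [norm_smul, Real.norm_eq_abs,
        abs_of_nonneg (mul_nonneg (gaussKer_pos hσ z x).le (hnn x))]
      have hmm := mul_le_mul_of_nonneg_right (gaussKer_le hσ z x)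
        (mul_nonneg (hnn x) (norm_nonneg x))
      calc gaussKer n σ z x * p x * ‖x‖ = gaussKer n σ z x * (p x * ‖x‖) := by ring
        _ ≤ C * (p x * ‖x‖) := hmm
        _ = C * (‖x‖ * p x) := by ring
  -- positivity
  have hpos : ∀ z : EuclideanSpace ℝ (Fin n), 0 < smoothedDensity n σ p z := by
    intro z
    rw [smoothedDensity,
      integral_pos_iff_support_of_nonneg
        (fun x => mul_nonneg (gaussKer_pos hσ z x).le (hnn x)) (int1 z)]
    have hsub : Function.support p ⊆ Function.support (fun x => gaussKer n σ z x * p x) := by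
      intro x hx
      exact mul_ne_zero (gaussKer_pos hσ z x).ne' hx
    have hp0 : volume (Function.support p) ≠ 0 := by
      intro h
      have hae : ∀ᵐ x, p x = 0 := by
        rw [ae_iff]
        simpa [Function.support] using h
      rw [integral_congr_ae (g := fun _ => (0:ℝ)) hae] at hprob
      simp at hprob
    calc (0:ENNReal) < volume (Function.support p) := pos_iff_ne_zero.mpr hp0
      _ ≤ _ := measure_mono hsub
  refine ⟨hpos, fun z => ?_⟩
  set G : EuclideanSpace ℝ (Fin n) :=
    (σ ^ 2)⁻¹ • (posteriorMoment n σ p z - smoothedDensity n σ p z • z) with hG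
  set F' : EuclideanSpace ℝ (Fin n) → EuclideanSpace ℝ (Fin n) →
      (EuclideanSpace ℝ (Fin n) →L[ℝ] ℝ) :=
    fun z' x => ((gaussKer n σ z' x * p x) * (σ ^ 2)⁻¹) • innerSL ℝ (x - z') with hF'
  have hderiv : ∀ (x z' : EuclideanSpace ℝ (Fin n)),
      HasFDerivAt (fun w => gaussKer n σ w x * p x) (F' z' x) z' := by
    intro x z'
    have := (hasFDerivAt_gaussKer hσ x z').mul_const (p x)
    refine this.congr_fderiv ?_
    rw [smul_smul, hF']
    congr 1
    ring
  have hbound : ∀ (z' x : EuclideanSpace ℝ (Fin n)),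
      ‖F' z' x‖ ≤ (C * (2 * σ) * (σ ^ 2)⁻¹) * p x := by
    intro z' x
    have hgp : (0:ℝ) ≤ gaussKer n σ z' x * p x := mul_nonneg (gaussKer_pos hσ z' x).le (hnn x)
    simp only [hF']
    rw [norm_smul (gaussKer n σ z' x * p x * (σ ^ 2)⁻¹) ((innerSL ℝ) (x - z')), Real.norm_eq_abs, innerSL_apply_norm,
      abs_of_nonneg (mul_nonneg hgp (by positivity))]
    have h1 : gaussKer n σ z' x * ‖x - z'‖ ≤ C * (2 * σ) := gaussKer_mul_norm_le hσ z' x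
    have h2 := mul_le_mul_of_nonneg_right h1
      (mul_nonneg (hnn x) (by positivity : (0:ℝ) ≤ (σ ^ 2)⁻¹))
    calc gaussKer n σ z' x * p x * (σ ^ 2)⁻¹ * ‖x - z'‖
        = gaussKer n σ z' x * ‖x - z'‖ * (p x * (σ ^ 2)⁻¹) := by ring
      _ ≤ C * (2 * σ) * (p x * (σ ^ 2)⁻¹) := h2
      _ = C * (2 * σ) * (σ ^ 2)⁻¹ * p x := by ring
  have key : HasFDerivAt (smoothedDensity n σ p) (∫ x, F' z x) z := by
    refine hasFDerivAt_integral_of_dominated_of_fderiv_le (s := Metric.ball z 1)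
      (bound := fun x => (C * (2 * σ) * (σ ^ 2)⁻¹) * p x) (Metric.ball_mem_nhds z one_pos) ?_ (int1 z) ?_ ?_ ?_ ?_
    · exact Filter.Eventually.of_forall fun z' =>
        ((hcont z').measurable.mul hmeas).aestronglyMeasurable
    · have hc : Continuous fun x : EuclideanSpace ℝ (Fin n) => innerSL ℝ (x - z) :=
        (innerSL ℝ).continuous.comp (continuous_id.sub continuous_const)
      exact ((((hcont z).measurable.mul hmeas).mul measurable_const).aestronglyMeasurable).smul
        hc.aestronglyMeasurable
    · exact Filter.Eventually.of_forall fun x => fun z' _ => hbound z' x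
    · exact hpint.const_mul _
    · exact Filter.Eventually.of_forall fun x => fun z' _ => hderiv x z'
  set v : EuclideanSpace ℝ (Fin n) → EuclideanSpace ℝ (Fin n) :=
    fun x => ((gaussKer n σ z x * p x) * (σ ^ 2)⁻¹) • (x - z) with hv
  have hveq : (fun x => F' z x) = fun x => innerSL ℝ (v x) := by
    funext x
    simp only [hF', hv]
    exact (_root_.map_smul (innerSL ℝ) _ _).symm
  have hvrw : v = fun x => (σ ^ 2)⁻¹ •
      ((gaussKer n σ z x * p x) • x - (gaussKer n σ z x * p x) • z) := by
    funext x
    simp only [hv, smul_sub, smul_smul]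
    simp [mul_comm]
  have hvint : Integrable v := by
    rw [hvrw]
    exact (((int2 z).sub ((int1 z).smul_const z)).smul ((σ ^ 2)⁻¹ : ℝ))
  have hintF' : ∫ x, F' z x = innerSL ℝ G := by
    rw [hveq, (innerSL ℝ).integral_comp_comm hvint]
    congr 1
    rw [hvrw, integral_smul, integral_sub (int2 z) ((int1 z).smul_const z),
      integral_smul_const, hG]
    rfl
  refine ⟨G, ?_, ?_⟩
  · rw [hasGradientAt_iff_hasFDerivAt]
    have htd : (InnerProductSpace.toDual ℝ (EuclideanSpace ℝ (Fin n))) G = innerSL ℝ G := by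
      ext y
      simp [InnerProductSpace.toDual_apply_apply]
    rw [htd, ← hintF']
    exact key
  · rw [hG, smul_smul, mul_inv_cancel₀ hσ2, one_smul]
end
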